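/- arXiv:2510.22816 — 7 statements merged into one kernel-verified Lean document; each statement's English description precedes it below -/
import Mathlib

section
/- Let n ≥ 1, let p > 0, let f ∈ ℝ^n be a nonzero vector, and let e_1, …, e_n be independent rate-1 exponential random variables. Define z_i = |f_i| / e_i^{1/p}. Then almost surely there is a unique index attaining max_j z_j, and for every i ∈ {1,…,n} the probability that z_i > z_j for all j ≠ i equals |f_i|^p / ||f||_p^p. -/
open MeasureTheory ProbabilityTheory Real Set

namespace PerfectLpAux

instance : IsProbabilityMeasure (expMeasure 1) := isProbabilityMeasure_expMeasure one_pos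

lemma expMeasure_Iic_zero : expMeasure 1 (Iic (0:ℝ)) = 0 := by
  have h1 : expMeasure 1 (Iio (0:ℝ)) = 0 := by
    rw [expMeasure, gammaMeasure, withDensity_apply _ measurableSet_Iio]
    exact lintegral_gammaPDF_of_nonpos le_rfl
  have h2 : expMeasure 1 ({(0:ℝ)}) = 0 := by
    rw [expMeasure, gammaMeasure, withDensity_apply _ (measurableSet_singleton 0)]
    exact setLIntegral_measure_zero _ _ (measure_singleton 0)
  have : Iic (0:ℝ) = Iio 0 ∪ {0} := by ext x; simp [le_iff_lt_or_eq]
  rw [this]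
  exact le_antisymm ((measure_union_le _ _).trans (by simp [h1, h2])) zero_le

lemma ae_pos_expMeasure : ∀ᵐ t ∂(expMeasure 1), (0:ℝ) < t := by
  rw [ae_iff]
  refine measure_mono_null (fun t ht => ?_) expMeasure_Iic_zero
  simpa using not_lt.mp ht

lemma expMeasure_Ioi {a : ℝ} (ha : 0 ≤ a) :
    expMeasure 1 (Ioi a) = ENNReal.ofReal (rexp (-a)) := by
  have hIic : expMeasure 1 (Iic a) = ENNReal.ofReal (1 - rexp (-a)) := by
    rw [expMeasure, gammaMeasure, withDensity_apply _ measurableSet_Iic]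
    have := lintegral_exponentialPDF_eq_antiDeriv (r := 1) one_pos a
    simpa [gammaPDF, exponentialPDF, exponentialPDFReal, ha] using this
  have hcompl : Ioi a = (Iic a)ᶜ := by simp
  rw [hcompl, measure_compl measurableSet_Iic (measure_ne_top _ _), hIic]
  have hle : rexp (-a) ≤ 1 := exp_le_one_iff.mpr (by linarith)
  rw [measure_univ]
  rw [← ENNReal.ofReal_one, ← ENNReal.ofReal_sub _ (by linarith [Real.exp_pos (-a)])]
  norm_num

lemma key_integral {b : ℝ} (hb : 0 ≤ b) :
    ∫⁻ t, ENNReal.ofReal (rexp (-(b * t))) ∂(expMeasure 1) = ENNReal.ofReal (1/(1+b)) := by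
  have h1b : 0 < 1 + b := by linarith
  have hmeaspdf : Measurable (gammaPDF 1 1) :=
    (measurable_gammaPDFReal 1 1).ennreal_ofReal
  have hmeasg : Measurable fun t : ℝ => ENNReal.ofReal (rexp (-(b * t))) :=
    ((measurable_id.const_mul b).neg.exp).ennreal_ofReal
  rw [expMeasure, gammaMeasure, lintegral_withDensity_eq_lintegral_mul _ hmeaspdf hmeasg]
  have hpt : ∀ t : ℝ, gammaPDF 1 1 t * ENNReal.ofReal (rexp (-(b * t)))
      = ENNReal.ofReal (1/(1+b)) * exponentialPDF (1+b) t := by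
    intro t
    have : gammaPDF 1 1 t = exponentialPDF 1 t := rfl
    rw [this, exponentialPDF_eq, exponentialPDF_eq]
    split_ifs with h
    · rw [← ENNReal.ofReal_mul (by positivity), ← ENNReal.ofReal_mul (by positivity)]
      congr 1
      rw [one_mul, ← Real.exp_add]
      field_simp
      ring_nf
    · simp
  calc (∫⁻ t, gammaPDF 1 1 t * ENNReal.ofReal (rexp (-(b * t))))
      = ∫⁻ t, ENNReal.ofReal (1/(1+b)) * exponentialPDF (1+b) t := lintegral_congr hpt
    _ = ENNReal.ofReal (1/(1+b)) := by
        rw [lintegral_const_mul _ (by exact (measurable_exponentialPDFReal _).ennreal_ofReal :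
            Measurable (exponentialPDF (1+b))),
          lintegral_exponentialPDF_eq_one h1b, mul_one]


lemma slice {p : ℝ} (hp : 0 < p) (g c t : ℝ) (hc : c ≠ 0) (ht : 0 < t) :
    expMeasure 1 {s : ℝ | |g| / s ^ (1/p) < |c| / t ^ (1/p)}
      = ENNReal.ofReal (rexp (-(|g| ^ p / |c| ^ p * t))) := by
  set a := |g| ^ p / |c| ^ p * t with ha_def
  have hcpos : 0 < |c| := abs_pos.mpr hc
  have ha : 0 ≤ a := by positivity
  have hv : 0 < t ^ (1/p) := rpow_pos_of_pos ht _
  have hvp : (t ^ (1/p)) ^ p = t := by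
    rw [← Real.rpow_mul ht.le, one_div, inv_mul_cancel₀ hp.ne', Real.rpow_one]
  have hiff : ∀ s : ℝ, 0 < s →
      ((|g| / s ^ (1/p) < |c| / t ^ (1/p)) ↔ a < s) := by
    intro s hs
    have hu : 0 < s ^ (1/p) := rpow_pos_of_pos hs _
    have hsp : (s ^ (1/p)) ^ p = s := by
      rw [← Real.rpow_mul hs.le, one_div, inv_mul_cancel₀ hp.ne', Real.rpow_one]
    have hA : (|g| * t ^ (1/p) / |c|) ^ p = a := by
      rw [Real.div_rpow (by positivity) (abs_nonneg c),
        Real.mul_rpow (abs_nonneg g) hv.le, hvp, ha_def]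
      ring
    calc |g| / s ^ (1/p) < |c| / t ^ (1/p)
        ↔ |g| * t ^ (1/p) < |c| * s ^ (1/p) := div_lt_div_iff₀ hu hv
      _ ↔ |g| * t ^ (1/p) / |c| < s ^ (1/p) := by rw [div_lt_iff₀ hcpos, mul_comm (|c|) (s ^ (1/p))]
      _ ↔ (|g| * t ^ (1/p) / |c|) ^ p < (s ^ (1/p)) ^ p :=
          (Real.rpow_lt_rpow_iff (by positivity) hu.le hp).symm
      _ ↔ a < s := by rw [hsp, hA]
  have hae : {s : ℝ | |g| / s ^ (1/p) < |c| / t ^ (1/p)} =ᵐ[expMeasure 1] Ioi a := by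
    refine Filter.eventuallyEq_set.mpr ?_
    rw [ae_iff]
    refine measure_mono_null (fun s hs => ?_) expMeasure_Iic_zero
    by_contra h
    have hs0 : 0 < s := lt_of_not_ge (by simpa using h)
    exact hs ((hiff s hs0).trans (by simp [mem_Ioi]))
  rw [measure_congr hae, expMeasure_Ioi ha]

lemma pi_slice {m : ℕ} {p : ℝ} (hp : 0 < p) (f : Fin (m+1) → ℝ) (i : Fin (m+1))
    (hfi : f i ≠ 0) :
    Measure.pi (fun _ : Fin (m+1) => expMeasure 1)
      {x | ∀ j, j ≠ i → |f j| / (x j) ^ (1/p) < |f i| / (x i) ^ (1/p)}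
      = ENNReal.ofReal (|f i| ^ p / ∑ j, |f j| ^ p) := by
  classical
  have hz : ∀ g : ℝ, Measurable fun s : ℝ => |g| / s ^ (1/p) :=
    fun g => measurable_const.div (measurable_id.pow_const _)
  set C : Set (ℝ × (Fin m → ℝ)) :=
    {q | ∀ k, |f (i.succAbove k)| / (q.2 k) ^ (1/p) < |f i| / q.1 ^ (1/p)} with hC
  have hCmeas : MeasurableSet C := by
    have : C = ⋂ k, {q : ℝ × (Fin m → ℝ) |
        |f (i.succAbove k)| / (q.2 k) ^ (1/p) < |f i| / q.1 ^ (1/p)} := by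
      ext q; simp [hC]
    rw [this]
    exact MeasurableSet.iInter fun k =>
      measurableSet_lt ((hz _).comp ((measurable_pi_apply k).comp measurable_snd))
        ((hz _).comp measurable_fst)
  have hpre : (MeasurableEquiv.piFinSuccAbove (fun _ : Fin (m+1) => ℝ) i) ⁻¹' C
      = {x | ∀ j, j ≠ i → |f j| / (x j) ^ (1/p) < |f i| / (x i) ^ (1/p)} := by
    ext x
    have happ : (MeasurableEquiv.piFinSuccAbove (fun _ : Fin (m+1) => ℝ) i) x
        = (x i, fun k => x (i.succAbove k)) := rfl
    simp only [mem_preimage, happ, hC, mem_setOf_eq]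
    constructor
    · intro h j hj
      obtain ⟨k, rfl⟩ := Fin.exists_succAbove_eq hj
      exact h k
    · intro h k
      exact h _ (Fin.succAbove_ne i k)
  have hmp := measurePreserving_piFinSuccAbove (fun _ : Fin (m+1) => expMeasure 1) i
  rw [← hpre, hmp.measure_preimage hCmeas.nullMeasurableSet, Measure.prod_apply hCmeas]
  set lam : Fin (m+1) → ℝ := fun j => |f j| ^ p with hlam
  have hli : 0 < lam i := rpow_pos_of_pos (abs_pos.mpr hfi) p
  set S := ∑ k : Fin m, lam (i.succAbove k) with hSdef
  have hS : 0 ≤ S := Finset.sum_nonneg fun k _ => rpow_nonneg (abs_nonneg _) _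
  have hinner : ∀ t : ℝ, 0 < t →
      (Measure.pi fun _ : Fin m => expMeasure 1) (Prod.mk t ⁻¹' C)
      = ENNReal.ofReal (rexp (-(S / lam i * t))) := by
    intro t ht
    have hset : Prod.mk t ⁻¹' C = Set.pi univ
        (fun k => {s : ℝ | |f (i.succAbove k)| / s ^ (1/p) < |f i| / t ^ (1/p)}) := by
      ext y; simp [hC, Set.mem_univ_pi]
    rw [hset, Measure.pi_pi]
    have hterm : ∀ k : Fin m,
        expMeasure 1 {s : ℝ | |f (i.succAbove k)| / s ^ (1/p) < |f i| / t ^ (1/p)}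
        = ENNReal.ofReal (rexp (-(lam (i.succAbove k) / lam i * t))) := fun k =>
      slice hp _ _ t hfi ht
    simp_rw [hterm]
    rw [← ENNReal.ofReal_prod_of_nonneg (fun k _ => (exp_pos _).le), ← Real.exp_sum]
    congr 1
    rw [Finset.sum_neg_distrib, ← Finset.sum_mul, ← Finset.sum_div]
  have hcongr : ∫⁻ t, (Measure.pi fun _ : Fin m => expMeasure 1) (Prod.mk t ⁻¹' C)
        ∂(expMeasure 1)
      = ∫⁻ t, ENNReal.ofReal (rexp (-(S / lam i * t))) ∂(expMeasure 1) :=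
    lintegral_congr_ae (ae_pos_expMeasure.mono fun t ht => hinner t ht)
  rw [hcongr, key_integral (by positivity)]
  congr 1
  have hsum : ∑ j, lam j = lam i + S := Fin.sum_univ_succAbove lam i
  show 1 / (1 + S / lam i) = lam i / ∑ j, lam j
  rw [hsum]
  field_simp


end PerfectLpAux

open PerfectLpAux Set

/-- Let `n ≥ 1`, `p > 0`, let `f ∈ ℝⁿ` be a nonzero vector, and let
`e 1, …, e n` be independent rate-1 exponential random variables.  Define
`z i = |f i| / (e i) ^ (1/p)`.  Then almost surely there is a unique index attaining
`max_j z j`, and for every `i` the probability that `z i > z j` for all `j ≠ i` equals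
`|f i| ^ p / ‖f‖_p ^ p`. -/
theorem perfect_lp_sampling_probability
    {Ω : Type*} [MeasurableSpace Ω] (μ : Measure Ω) [IsProbabilityMeasure μ]
    (n : ℕ) (hn : 1 ≤ n) (p : ℝ) (hp : 0 < p)
    (f : Fin n → ℝ) (hf : f ≠ 0)
    (e : Fin n → Ω → ℝ) (hmeas : ∀ i, Measurable (e i))
    (hindep : iIndepFun e μ)
    (hdist : ∀ i, Measure.map (e i) μ = expMeasure 1) :
    (∀ᵐ ω ∂μ, ∃! i : Fin n, ∀ j : Fin n, j ≠ i →
        |f j| / (e j ω) ^ (1 / p) < |f i| / (e i ω) ^ (1 / p)) ∧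
      ∀ i : Fin n,
        μ {ω | ∀ j : Fin n, j ≠ i →
            |f j| / (e j ω) ^ (1 / p) < |f i| / (e i ω) ^ (1 / p)} =
          ENNReal.ofReal (|f i| ^ p / ∑ j, |f j| ^ p) := by
  classical
  obtain ⟨m, rfl⟩ : ∃ m, n = m + 1 := ⟨n - 1, (Nat.succ_pred_eq_of_pos hn).symm⟩
  have hzmeas : ∀ g : ℝ, Measurable fun s : ℝ => |g| / s ^ (1 / p) :=
    fun g => measurable_const.div (measurable_id.pow_const _)
  have hBmeas : ∀ i : Fin (m + 1), MeasurableSet {x : Fin (m + 1) → ℝ |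
      ∀ j : Fin (m + 1), j ≠ i → |f j| / (x j) ^ (1 / p) < |f i| / (x i) ^ (1 / p)} := by
    intro i
    have : {x : Fin (m + 1) → ℝ |
        ∀ j : Fin (m + 1), j ≠ i → |f j| / (x j) ^ (1 / p) < |f i| / (x i) ^ (1 / p)}
        = ⋂ j, ⋂ _ : j ≠ i, {x : Fin (m + 1) → ℝ |
            |f j| / (x j) ^ (1 / p) < |f i| / (x i) ^ (1 / p)} := by
      ext x; simp
    rw [this]
    exact MeasurableSet.iInter fun j => MeasurableSet.iInter fun _ =>
      measurableSet_lt ((hzmeas _).comp (measurable_pi_apply j))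
        ((hzmeas _).comp (measurable_pi_apply i))
  have hE : Measurable fun ω (j : Fin (m + 1)) => e j ω :=
    measurable_pi_lambda _ hmeas
  have hmap : Measure.map (fun ω (j : Fin (m + 1)) => e j ω) μ
      = Measure.pi (fun _ : Fin (m + 1) => expMeasure 1) := by
    refine (Measure.pi_eq fun s hs => ?_).symm
    rw [Measure.map_apply hE (MeasurableSet.univ_pi hs)]
    have hplift : (fun ω (j : Fin (m + 1)) => e j ω) ⁻¹' (univ.pi s) = ⋂ j, e j ⁻¹' s j := by
      ext ω; simp [Set.mem_univ_pi]
    rw [hplift, hindep.meas_iInter fun j => ⟨s j, hs j, rfl⟩]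
    exact Finset.prod_congr rfl fun j _ => by
      rw [← hdist j, Measure.map_apply (hmeas j) (hs j)]
  have hval : ∀ i : Fin (m + 1),
      μ {ω | ∀ j : Fin (m + 1), j ≠ i →
          |f j| / (e j ω) ^ (1 / p) < |f i| / (e i ω) ^ (1 / p)}
        = ENNReal.ofReal (|f i| ^ p / ∑ j, |f j| ^ p) := by
    intro i
    have hAi : {ω | ∀ j : Fin (m + 1), j ≠ i →
          |f j| / (e j ω) ^ (1 / p) < |f i| / (e i ω) ^ (1 / p)}
        = (fun ω (j : Fin (m + 1)) => e j ω) ⁻¹' {x : Fin (m + 1) → ℝ |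
          ∀ j : Fin (m + 1), j ≠ i → |f j| / (x j) ^ (1 / p) < |f i| / (x i) ^ (1 / p)} := rfl
    rw [hAi, ← Measure.map_apply hE (hBmeas i), hmap]
    by_cases hfi : f i = 0
    · obtain ⟨k, hk⟩ := Function.ne_iff.mp hf
      have hki : k ≠ i := fun h => hk (by rw [h, hfi]; rfl)
      have hsub : {x : Fin (m + 1) → ℝ |
          ∀ j : Fin (m + 1), j ≠ i → |f j| / (x j) ^ (1 / p) < |f i| / (x i) ^ (1 / p)}
          ⊆ {x : Fin (m + 1) → ℝ | x k ≤ 0} := by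
        intro x hx
        by_contra hpos
        have hxk : 0 < x k := lt_of_not_ge (by simpa using hpos)
        have h1 := hx k hki
        rw [hfi, abs_zero, zero_div] at h1
        exact absurd h1 (not_lt.mpr (div_nonneg (abs_nonneg _)
          (rpow_nonneg hxk.le _)))
      have hnull : Measure.pi (fun _ : Fin (m + 1) => expMeasure 1)
          {x : Fin (m + 1) → ℝ | x k ≤ 0} = 0 := by
        have hps : {x : Fin (m + 1) → ℝ | x k ≤ 0}
            = Set.pi univ (fun j => if j = k then Iic (0:ℝ) else univ) := by
          ext x
          simp only [Set.mem_univ_pi, mem_setOf_eq]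
          constructor
          · intro h j
            by_cases hj : j = k
            · subst hj; simp [h]
            · simp [hj]
          · intro h
            have := h k
            simpa using this
        rw [hps, Measure.pi_pi]
        refine Finset.prod_eq_zero (Finset.mem_univ k) ?_
        simp [expMeasure_Iic_zero]
      have h0 : ENNReal.ofReal (|f i| ^ p / ∑ j, |f j| ^ p) = 0 := by
        rw [hfi, abs_zero, Real.zero_rpow hp.ne', zero_div, ENNReal.ofReal_zero]
      rw [h0]
      exact measure_mono_null hsub hnull
    · exact pi_slice hp f i hfi
  have hTpos : 0 < ∑ j, |f j| ^ p := by
    obtain ⟨k, hk⟩ := Function.ne_iff.mp hf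
    exact Finset.sum_pos' (fun j _ => rpow_nonneg (abs_nonneg _) _)
      ⟨k, Finset.mem_univ k, rpow_pos_of_pos (abs_pos.mpr hk) _⟩
  have hAmeas : ∀ i : Fin (m + 1), MeasurableSet {ω | ∀ j : Fin (m + 1), j ≠ i →
      |f j| / (e j ω) ^ (1 / p) < |f i| / (e i ω) ^ (1 / p)} :=
    fun i => hE (hBmeas i)
  have hdisj : Pairwise (Function.onFun Disjoint
      (fun i => {ω | ∀ j : Fin (m + 1), j ≠ i →
        |f j| / (e j ω) ^ (1 / p) < |f i| / (e i ω) ^ (1 / p)})) := by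
    intro i i' hne
    refine Set.disjoint_left.mpr fun ω hi hi' => ?_
    exact absurd (hi' i hne) (not_lt.mpr (le_of_lt (hi i' hne.symm)))
  have hUnion : μ (⋃ i : Fin (m + 1), {ω | ∀ j : Fin (m + 1), j ≠ i →
      |f j| / (e j ω) ^ (1 / p) < |f i| / (e i ω) ^ (1 / p)}) = 1 := by
    rw [measure_iUnion hdisj hAmeas, tsum_fintype]
    simp_rw [hval]
    rw [← ENNReal.ofReal_sum_of_nonneg
        (fun i _ => div_nonneg (rpow_nonneg (abs_nonneg _) _) hTpos.le),
      ← Finset.sum_div, div_self hTpos.ne', ENNReal.ofReal_one]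
  have hae : ∀ᵐ ω ∂μ, ∃ i : Fin (m + 1), ∀ j : Fin (m + 1), j ≠ i →
      |f j| / (e j ω) ^ (1 / p) < |f i| / (e i ω) ^ (1 / p) := by
    rw [ae_iff]
    have hc : μ (⋃ i : Fin (m + 1), {ω | ∀ j : Fin (m + 1), j ≠ i →
        |f j| / (e j ω) ^ (1 / p) < |f i| / (e i ω) ^ (1 / p)})ᶜ = 0 := by
      rw [measure_compl (MeasurableSet.iUnion hAmeas) (measure_ne_top _ _), hUnion,
        measure_univ, tsub_self]
    refine measure_mono_null (fun ω hω => ?_) hc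
    simpa using hω
  refine ⟨hae.mono ?_, hval⟩
  rintro ω ⟨i, hi⟩
  exact ⟨i, hi, fun y hy => by
    by_contra hne
    exact absurd (hy i (Ne.symm hne)) (lt_asymm (hi y hne))⟩
end

section
/- Let n ≥ 1, let p > 0, let f ∈ ℝ^n be a nonzero vector, and let e_1, …, e_n be independent rate-1 exponential random variables. Define z_i = |f_i| / e_i^{1/p} and Z = max_{1≤i≤n} z_i. Then Z^{−p} is exponentially distributed with rate ||f||_p^p; equivalently, Z has the same distribution as ||f||_p / E^{1/p}, where E is a rate-1 exponential random variable. -/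
open MeasureTheory ProbabilityTheory Real Set

section Aux

lemma myExpMeasure_Iic {r : ℝ} (hr : 0 < r) (x : ℝ) :
    expMeasure r (Iic x) = ENNReal.ofReal (if 0 ≤ x then 1 - exp (-(r * x)) else 0) := by
  rw [expMeasure, gammaMeasure, withDensity_apply _ measurableSet_Iic]
  exact lintegral_exponentialPDF_eq_antiDeriv hr x

lemma myExpMeasure_Iic_nonpos {r : ℝ} (hr : 0 < r) {x : ℝ} (hx : x ≤ 0) :
    expMeasure r (Iic x) = 0 := by
  rw [myExpMeasure_Iic hr]
  split_ifs with h
  · have : x = 0 := le_antisymm hx h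
    simp [this]
  · simp

lemma myExpMeasure_singleton (r x : ℝ) : expMeasure r {x} = 0 := by
  rw [expMeasure, gammaMeasure, withDensity_apply _ (measurableSet_singleton x),
    Measure.restrict_eq_zero.mpr (by simp), lintegral_zero_measure]

lemma myExpMeasure_Ioi {r : ℝ} (hr : 0 < r) {x : ℝ} (hx : 0 ≤ x) :
    expMeasure r (Ioi x) = ENNReal.ofReal (exp (-(r * x))) := by
  haveI : IsProbabilityMeasure (expMeasure r) := isProbabilityMeasure_expMeasure hr
  have h1 : expMeasure r (Ioi x) = 1 - expMeasure r (Iic x) := by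
    rw [← compl_Iic]
    exact prob_compl_eq_one_sub measurableSet_Iic
  have h2 : exp (-(r * x)) ≤ 1 := exp_le_one_iff.mpr (neg_nonpos.mpr (by positivity))
  rw [h1, myExpMeasure_Iic hr, if_pos hx, ← ENNReal.ofReal_one,
    ← ENNReal.ofReal_sub _ (sub_nonneg.mpr h2)]
  congr 1
  ring

lemma myExpMeasure_Ici {r : ℝ} (hr : 0 < r) {x : ℝ} (hx : 0 ≤ x) :
    expMeasure r (Ici x) = ENNReal.ofReal (exp (-(r * x))) := by
  rw [← Ioi_union_left]
  refine le_antisymm ?_ ?_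
  · calc expMeasure r (Ioi x ∪ {x}) ≤ expMeasure r (Ioi x) + expMeasure r {x} :=
        measure_union_le _ _
    _ = ENNReal.ofReal (exp (-(r * x))) := by
        rw [myExpMeasure_singleton, add_zero, myExpMeasure_Ioi hr hx]
  · rw [← myExpMeasure_Ioi hr hx]
    exact measure_mono subset_union_left

lemma myExp_ae_pos : ∀ᵐ x ∂(expMeasure 1), 0 < x := by
  rw [ae_iff]
  have h : {x : ℝ | ¬ 0 < x} = Iic 0 := by ext x; simp
  rw [h]
  exact myExpMeasure_Iic_nonpos one_pos le_rfl

lemma fin_sup_lt_iff {n : ℕ} (hn : 1 ≤ n) (z : Fin n → ℝ) (a : ℝ) :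
    (⨆ i, z i) < a ↔ ∀ i, z i < a := by
  haveI : Nonempty (Fin n) := ⟨⟨0, hn⟩⟩
  constructor
  · intro h i
    exact lt_of_le_of_lt (le_ciSup (Set.Finite.bddAbove (Set.finite_range z)) i) h
  · intro h
    obtain ⟨j, hj⟩ := Finite.exists_max z
    exact lt_of_le_of_lt (ciSup_le hj) (h j)

end Aux

/-- With `z i = |f i| / (e i) ^ (1/p)` built from independent rate-1
exponentials and `Z = max_i z i`, the random variable `Z ^ (-p)` is exponentially
distributed with rate `‖f‖_p ^ p`; equivalently, `Z` has the same distribution as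
`‖f‖_p / E ^ (1/p)` for a rate-1 exponential `E`. -/
theorem max_scaled_coordinate_distribution
    {Ω : Type*} [MeasurableSpace Ω] (μ : Measure Ω) [IsProbabilityMeasure μ]
    (n : ℕ) (hn : 1 ≤ n) (p : ℝ) (hp : 0 < p)
    (f : Fin n → ℝ) (hf : f ≠ 0)
    (e : Fin n → Ω → ℝ) (hmeas : ∀ i, Measurable (e i))
    (hindep : iIndepFun e μ)
    (hdist : ∀ i, Measure.map (e i) μ = expMeasure 1) :
    Measure.map (fun ω => (⨆ i : Fin n, |f i| / (e i ω) ^ (1 / p)) ^ (-p)) μ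
        = expMeasure (∑ i, |f i| ^ p) ∧
      Measure.map (fun ω => ⨆ i : Fin n, |f i| / (e i ω) ^ (1 / p)) μ
        = Measure.map (fun x : ℝ => (∑ i, |f i| ^ p) ^ (1 / p) / x ^ (1 / p))
            (expMeasure 1) := by
  haveI : Nonempty (Fin n) := ⟨⟨0, hn⟩⟩
  obtain ⟨j, hfj⟩ : ∃ j, f j ≠ 0 := Function.ne_iff.mp hf
  have hS : 0 < ∑ i, |f i| ^ p :=
    Finset.sum_pos' (fun i _ => rpow_nonneg (abs_nonneg _) _)
      ⟨j, Finset.mem_univ j, rpow_pos_of_pos (abs_pos.mpr hfj) p⟩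
  -- measurability
  have hZm : Measurable fun ω => ⨆ i : Fin n, |f i| / (e i ω) ^ (1 / p) := by
    refine Measurable.iSup fun i => measurable_const.div ?_
    have := hmeas i
    measurability
  have hgm : Measurable fun ω => (⨆ i : Fin n, |f i| / (e i ω) ^ (1 / p)) ^ (-p) := by
    have h1 : Measurable fun x : ℝ => x ^ (-p) := by measurability
    exact h1.comp hZm
  have hhm : Measurable fun x : ℝ => (∑ i, |f i| ^ p) ^ (1 / p) / x ^ (1 / p) := by
    refine measurable_const.div ?_
    measurability
  -- a.e. all coordinates positive
  have hepos : ∀ᵐ ω ∂μ, ∀ i, 0 < e i ω := by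
    rw [ae_all_iff]
    intro i
    rw [ae_iff]
    have h : {ω | ¬ 0 < e i ω} = e i ⁻¹' (Iic 0) := by ext ω; simp
    rw [h, ← Measure.map_apply (hmeas i) measurableSet_Iic, hdist i]
    exact myExpMeasure_Iic_nonpos one_pos le_rfl
  -- positivity of the sup on the good set
  have hZpos : ∀ ω, (∀ i, 0 < e i ω) → 0 < ⨆ i : Fin n, |f i| / (e i ω) ^ (1 / p) := by
    intro ω hω
    have h0 : 0 < |f j| / (e j ω) ^ (1 / p) :=
      div_pos (abs_pos.mpr hfj) (rpow_pos_of_pos (hω j) _)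
    exact lt_of_lt_of_le h0 (le_ciSup (f := fun i : Fin n => |f i| / (e i ω) ^ (1 / p))
      (Set.Finite.bddAbove (Set.finite_range _)) j)
  -- independence core computations
  have hcore_lt : ∀ c : Fin n → ℝ, (∀ i, 0 ≤ c i) →
      μ (⋂ i, e i ⁻¹' Ioi (c i)) = ENNReal.ofReal (exp (-∑ i, c i)) := by
    intro c hc
    rw [hindep.meas_iInter (fun i => ⟨Ioi (c i), measurableSet_Ioi, rfl⟩)]
    have h1 : ∀ i : Fin n, μ (e i ⁻¹' Ioi (c i)) = ENNReal.ofReal (exp (-(c i))) := by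
      intro i
      rw [← Measure.map_apply (hmeas i) measurableSet_Ioi, hdist i,
        myExpMeasure_Ioi one_pos (hc i), one_mul]
    simp_rw [h1]
    rw [← ENNReal.ofReal_prod_of_nonneg (fun i _ => exp_nonneg _), ← Real.exp_sum]
    congr 1
    simp
  have hcore_le : ∀ c : Fin n → ℝ, (∀ i, 0 ≤ c i) →
      μ (⋂ i, e i ⁻¹' Ici (c i)) = ENNReal.ofReal (exp (-∑ i, c i)) := by
    intro c hc
    rw [hindep.meas_iInter (fun i => ⟨Ici (c i), measurableSet_Ici, rfl⟩)]
    have h1 : ∀ i : Fin n, μ (e i ⁻¹' Ici (c i)) = ENNReal.ofReal (exp (-(c i))) := by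
      intro i
      rw [← Measure.map_apply (hmeas i) measurableSet_Ici, hdist i,
        myExpMeasure_Ici one_pos (hc i), one_mul]
    simp_rw [h1]
    rw [← ENNReal.ofReal_prod_of_nonneg (fun i _ => exp_nonneg _), ← Real.exp_sum]
    congr 1
    simp
  constructor
  · -- first statement
    haveI : IsProbabilityMeasure (expMeasure (∑ i, |f i| ^ p)) :=
      isProbabilityMeasure_expMeasure hS
    haveI : IsProbabilityMeasure
        (Measure.map (fun ω => (⨆ i : Fin n, |f i| / (e i ω) ^ (1 / p)) ^ (-p)) μ) :=
      Measure.isProbabilityMeasure_map hgm.aemeasurable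
    apply Measure.ext_of_Iic
    intro t
    rw [Measure.map_apply hgm measurableSet_Iic, myExpMeasure_Iic hS t]
    rcases le_or_gt t 0 with ht | ht
    · -- left side is zero
      have hL : μ ((fun ω => (⨆ i : Fin n, |f i| / (e i ω) ^ (1 / p)) ^ (-p)) ⁻¹' Iic t)
          = 0 := by
        rw [measure_eq_zero_iff_ae_notMem]
        filter_upwards [hepos] with ω hω
        simp only [mem_preimage, mem_Iic, not_le]
        exact lt_of_le_of_lt ht (rpow_pos_of_pos (hZpos ω hω) _)
      rw [hL]
      split_ifs with h
      · have : t = 0 := le_antisymm ht h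
        simp [this]
      · simp
    · -- t > 0
      rw [if_pos ht.le]
      have hcompl : ((fun ω => (⨆ i : Fin n, |f i| / (e i ω) ^ (1 / p)) ^ (-p)) ⁻¹' Iic t)
          = ((fun ω => (⨆ i : Fin n, |f i| / (e i ω) ^ (1 / p)) ^ (-p)) ⁻¹' Ioi t)ᶜ := by
        rw [← preimage_compl, compl_Ioi]
      have hmeasIoi : μ ((fun ω => (⨆ i : Fin n, |f i| / (e i ω) ^ (1 / p)) ^ (-p)) ⁻¹' Ioi t)
          = ENNReal.ofReal (exp (-((∑ i, |f i| ^ p) * t))) := by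
        have hae : ((fun ω => (⨆ i : Fin n, |f i| / (e i ω) ^ (1 / p)) ^ (-p)) ⁻¹' Ioi t)
            =ᵐ[μ] ⋂ i, e i ⁻¹' Ioi (t * |f i| ^ p) := by
          rw [Filter.eventuallyEq_set]
          filter_upwards [hepos] with ω hω
          simp only [mem_preimage, mem_Ioi, mem_iInter]
          -- characterize the event
          have hZ0 : 0 < ⨆ i : Fin n, |f i| / (e i ω) ^ (1 / p) := hZpos ω hω
          have hs0 : (0:ℝ) ≤ t⁻¹ ^ (1 / p) := rpow_nonneg (by positivity) _
          have hsp : (t⁻¹ ^ (1 / p)) ^ p = t⁻¹ := by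
            rw [one_div, rpow_inv_rpow (by positivity) hp.ne']
          rw [Real.rpow_neg hZ0.le, lt_inv_comm₀ ht (rpow_pos_of_pos hZ0 p),
            ← hsp, rpow_lt_rpow_iff hZ0.le hs0 hp, fin_sup_lt_iff hn]
          refine forall_congr' fun i => ?_
          have hei := hω i
          have hei1 : 0 < (e i ω) ^ (1 / p) := rpow_pos_of_pos hei _
          have hmul : (t⁻¹ ^ (1 / p) * (e i ω) ^ (1 / p)) ^ p = t⁻¹ * e i ω := by
            rw [mul_rpow hs0 hei1.le, hsp, one_div, rpow_inv_rpow hei.le hp.ne']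
          rw [div_lt_iff₀ hei1,
            ← rpow_lt_rpow_iff (abs_nonneg _) (mul_nonneg hs0 hei1.le) hp, hmul,
            inv_mul_eq_div, lt_div_iff₀ ht, mul_comm]
        rw [measure_congr hae, hcore_lt (fun i => t * |f i| ^ p)
          (fun i => by positivity)]
        congr 1
        rw [← Finset.mul_sum, mul_comm]
      rw [hcompl, prob_compl_eq_one_sub (hgm measurableSet_Ioi), hmeasIoi,
        ← ENNReal.ofReal_one, ← ENNReal.ofReal_sub _ (exp_nonneg _)]
  · -- second statement
    haveI : IsProbabilityMeasure (expMeasure 1) := isProbabilityMeasure_expMeasure one_pos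
    haveI : IsProbabilityMeasure
        (Measure.map (fun ω => ⨆ i : Fin n, |f i| / (e i ω) ^ (1 / p)) μ) :=
      Measure.isProbabilityMeasure_map hZm.aemeasurable
    apply Measure.ext_of_Iic
    intro a
    rw [Measure.map_apply hZm measurableSet_Iic, Measure.map_apply hhm measurableSet_Iic]
    rcases le_or_gt a 0 with ha | ha
    · have hL : μ ((fun ω => ⨆ i : Fin n, |f i| / (e i ω) ^ (1 / p)) ⁻¹' Iic a) = 0 := by
        rw [measure_eq_zero_iff_ae_notMem]
        filter_upwards [hepos] with ω hω
        simp only [mem_preimage, mem_Iic, not_le]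
        exact lt_of_le_of_lt ha (hZpos ω hω)
      have hR : expMeasure 1
          ((fun x : ℝ => (∑ i, |f i| ^ p) ^ (1 / p) / x ^ (1 / p)) ⁻¹' Iic a) = 0 := by
        rw [measure_eq_zero_iff_ae_notMem]
        filter_upwards [myExp_ae_pos] with x hx
        simp only [mem_preimage, mem_Iic, not_le]
        exact lt_of_le_of_lt ha
          (div_pos (rpow_pos_of_pos hS _) (rpow_pos_of_pos hx _))
      rw [hL, hR]
    · -- a > 0
      have hap : 0 < a ^ p := rpow_pos_of_pos ha p
      have hL : μ ((fun ω => ⨆ i : Fin n, |f i| / (e i ω) ^ (1 / p)) ⁻¹' Iic a)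
          = ENNReal.ofReal (exp (-((∑ i, |f i| ^ p) / a ^ p))) := by
        have hae : ((fun ω => ⨆ i : Fin n, |f i| / (e i ω) ^ (1 / p)) ⁻¹' Iic a)
            =ᵐ[μ] ⋂ i, e i ⁻¹' Ici (|f i| ^ p / a ^ p) := by
          rw [Filter.eventuallyEq_set]
          filter_upwards [hepos] with ω hω
          simp only [mem_preimage, mem_Iic, mem_iInter, mem_Ici]
          rw [ciSup_le_iff (Set.Finite.bddAbove (Set.finite_range _))]
          refine forall_congr' fun i => ?_
          have hei := hω i
          have hei1 : 0 < (e i ω) ^ (1 / p) := rpow_pos_of_pos hei _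
          have hmul : (a * (e i ω) ^ (1 / p)) ^ p = e i ω * a ^ p := by
            rw [mul_rpow ha.le hei1.le, one_div, rpow_inv_rpow hei.le hp.ne', mul_comm]
          rw [div_le_iff₀ hei1,
            ← rpow_le_rpow_iff (abs_nonneg _) (mul_nonneg ha.le hei1.le) hp, hmul,
            ← div_le_iff₀ hap]
        rw [measure_congr hae, hcore_le (fun i => |f i| ^ p / a ^ p)
          (fun i => by positivity)]
        congr 2
        rw [← Finset.sum_div]
      have hR : expMeasure 1
          ((fun x : ℝ => (∑ i, |f i| ^ p) ^ (1 / p) / x ^ (1 / p)) ⁻¹' Iic a)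
          = ENNReal.ofReal (exp (-((∑ i, |f i| ^ p) / a ^ p))) := by
        have hae : ((fun x : ℝ => (∑ i, |f i| ^ p) ^ (1 / p) / x ^ (1 / p)) ⁻¹' Iic a)
            =ᵐ[expMeasure 1] Ici ((∑ i, |f i| ^ p) / a ^ p) := by
          rw [Filter.eventuallyEq_set]
          filter_upwards [myExp_ae_pos] with x hx
          simp only [mem_preimage, mem_Iic, mem_Ici]
          have hx1 : 0 < x ^ (1 / p) := rpow_pos_of_pos hx _
          have hSp : ((∑ i, |f i| ^ p) ^ (1 / p)) ^ p = ∑ i, |f i| ^ p := by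
            rw [one_div, rpow_inv_rpow hS.le hp.ne']
          have hmul : (a * x ^ (1 / p)) ^ p = x * a ^ p := by
            rw [mul_rpow ha.le hx1.le, one_div, rpow_inv_rpow hx.le hp.ne', mul_comm]
          rw [div_le_iff₀ hx1,
            ← rpow_le_rpow_iff (rpow_nonneg hS.le _) (mul_nonneg ha.le hx1.le) hp,
            hSp, hmul, ← div_le_iff₀ hap]
        rw [measure_congr hae, myExpMeasure_Ici one_pos (by positivity), one_mul]
      rw [hL, hR]
end

section
/- Let n ≥ 2, let p ≥ 1, and let f ∈ ℝ^n have at least two nonzero coordinates. Let e_1, …, e_n be independent rate-1 exponential random variables, define z_i = |f_i| / e_i^{1/p}, and let Z_(1) ≥ Z_(2) denote the largest and second-largest values among z_1, …, z_n. Then for every ε > 0, Pr[Z_(1)^p ≤ (1+ε)·Z_(2)^p] ≤ ε; consequently, for every ε ∈ (0,1], Pr[Z_(1) ≤ (1+ε)·Z_(2)] ≤ (1+ε)^p − 1. -/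
open MeasureTheory ProbabilityTheory Real

open Set



lemma nu_Iic (a : ℝ) :
    expMeasure 1 (Iic a) = ENNReal.ofReal (if 0 ≤ a then 1 - exp (-a) else 0) := by
  have h : expMeasure 1 = MeasureTheory.volume.withDensity (exponentialPDF 1) := rfl
  rw [h, withDensity_apply _ measurableSet_Iic]
  have := lintegral_exponentialPDF_eq_antiDeriv one_pos a
  simpa using this

lemma nu_neg : expMeasure 1 {x : ℝ | x ≤ 0} = 0 := by
  have : {x : ℝ | x ≤ 0} = Iic 0 := rfl
  rw [this, nu_Iic]; simp

lemma nu_Ioi {a : ℝ} (ha : 0 ≤ a) :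
    expMeasure 1 (Ioi a) = ENNReal.ofReal (exp (-a)) := by
  have hP : IsProbabilityMeasure (expMeasure 1) := isProbabilityMeasure_expMeasure one_pos
  have : Ioi a = (Iic a)ᶜ := (compl_Iic).symm
  rw [this, measure_compl measurableSet_Iic (measure_ne_top _ _), nu_Iic, if_pos ha,
    measure_univ, ← ENNReal.ofReal_one, ← ENNReal.ofReal_sub _ (by
      have := exp_le_one_iff.mpr (neg_nonpos.mpr ha); linarith)]
  norm_num

lemma lint_exp (s : ℝ) (hs : 0 ≤ s) :
    ∫⁻ x, ENNReal.ofReal (exp (-(s * x))) ∂(expMeasure 1) = ENNReal.ofReal (1 / (1 + s)) := by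
  have hpos : (0:ℝ) < 1 + s := by linarith
  have h : expMeasure 1 = MeasureTheory.volume.withDensity (exponentialPDF 1) := rfl
  have hpdfmeas : Measurable (exponentialPDF 1) :=
    (measurable_exponentialPDFReal 1).ennreal_ofReal
  have hfmeas : Measurable fun x : ℝ => ENNReal.ofReal (exp (-(s * x))) := by
    fun_prop
  rw [h, lintegral_withDensity_eq_lintegral_mul _ hpdfmeas hfmeas]
  have key : (fun x => exponentialPDF 1 x * ENNReal.ofReal (exp (-(s * x))))
      = fun x => ENNReal.ofReal (1 / (1 + s)) * exponentialPDF (1 + s) x := by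
    funext x
    rcases lt_or_ge x 0 with hx | hx
    · rw [exponentialPDF_of_neg hx, exponentialPDF_of_neg hx, zero_mul, mul_zero]
    · rw [exponentialPDF_of_nonneg hx, exponentialPDF_of_nonneg hx,
        ← ENNReal.ofReal_mul (by positivity), ← ENNReal.ofReal_mul (by positivity)]
      congr 1
      have h1 : (1 / (1 + s)) * ((1 + s) * exp (-((1 + s) * x))) = exp (-((1+s) * x)) := by
        field_simp
      rw [h1, one_mul, ← Real.exp_add]
      ring_nf
  have hm : Measurable (exponentialPDF (1+s)) := (measurable_exponentialPDFReal (1+s)).ennreal_ofReal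
  simp only [Pi.mul_apply]
  rw [show (fun x => exponentialPDF 1 x * ENNReal.ofReal (exp (-(s * x)))) = _ from key,
    lintegral_const_mul _ (hm), lintegral_exponentialPDF_eq_one hpos, mul_one]



lemma nu_ae_nonneg : ∀ᵐ x ∂(expMeasure 1), 0 ≤ x := by
  rw [ae_iff]
  refine measure_mono_null (fun x hx => ?_) nu_neg
  simpa using le_of_not_ge hx

lemma core {Ω : Type*} [MeasurableSpace Ω] (μ : Measure Ω) [IsProbabilityMeasure μ]
    {n : ℕ} (e : Fin n → Ω → ℝ) (hmeas : ∀ i, Measurable (e i))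
    (hindep : iIndepFun e μ)
    (hdist : ∀ i, Measure.map (e i) μ = expMeasure 1)
    (k : Fin n) (t : Fin n → ℝ) (ht : ∀ j, 0 ≤ t j) :
    μ {ω | ∀ j, j ≠ k → t j * e k ω < e j ω}
      = ENNReal.ofReal (1 / (1 + ∑ j ∈ Finset.univ.erase k, t j)) := by
  classical
  set T : Finset (Fin n) := Finset.univ.erase k with hT
  set Y : Ω → (T → ℝ) := fun ω j => e j ω with hY
  have hYmeas : Measurable Y := measurable_pi_lambda _ fun j => hmeas j
  have hInd : IndepFun (e k) Y μ := by
    have h := hindep.indepFun_finset {k} T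
      (by simp [hT, Finset.disjoint_singleton_left]) hmeas
    exact h.comp (φ := fun v : ({k} : Finset (Fin n)) → ℝ =>
      v ⟨k, Finset.mem_singleton_self k⟩) (measurable_pi_apply _) measurable_id
  have hmap : Measure.map (fun ω => (e k ω, Y ω)) μ
      = (expMeasure 1).prod (Measure.map Y μ) := by
    rw [← hdist k]
    exact (indepFun_iff_map_prod_eq_prod_map_map (hmeas k).aemeasurable
      hYmeas.aemeasurable).mp hInd
  set E : Set (ℝ × (T → ℝ)) := {q | ∀ j : T, t j * q.1 < q.2 j} with hE
  have hEmeas : MeasurableSet E := by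
    have : E = ⋂ j : T, {q : ℝ × (T → ℝ) | t j * q.1 < q.2 j} := by
      ext q; simp [hE]
    rw [this]
    exact MeasurableSet.iInter fun j => measurableSet_lt
      (measurable_fst.const_mul _) ((measurable_pi_apply j).comp measurable_snd)
  have hset : {ω | ∀ j, j ≠ k → t j * e k ω < e j ω}
      = (fun ω => (e k ω, Y ω)) ⁻¹' E := by
    ext ω
    simp only [mem_setOf_eq, mem_preimage, hE, hY, Subtype.forall, hT, Finset.mem_erase,
      Finset.mem_univ, and_true]
  have hprobY : IsProbabilityMeasure (Measure.map Y μ) :=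
    Measure.isProbabilityMeasure_map hYmeas.aemeasurable
  rw [hset, ← Measure.map_apply ((hmeas k).prodMk hYmeas) hEmeas, hmap,
    Measure.prod_apply hEmeas]
  have hslice : ∀ x : ℝ, (Measure.map Y μ) (Prod.mk x ⁻¹' E)
      = ∏ j ∈ T, expMeasure 1 (Ioi (t j * x)) := by
    intro x
    have hpre : Prod.mk x ⁻¹' E = Set.pi Set.univ (fun j : T => Ioi (t j * x)) := by
      ext y; simp [hE, Set.mem_pi]
    rw [Measure.map_apply hYmeas (by
      rw [hpre]; exact MeasurableSet.univ_pi fun _ => measurableSet_Ioi)]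
    have h2 : Y ⁻¹' (Prod.mk x ⁻¹' E) = ⋂ j ∈ T, e j ⁻¹' Ioi (t j * x) := by
      ext ω; simp [hE, hY, Subtype.forall]
    rw [h2, hindep.measure_inter_preimage_eq_mul T
      (fun j hj => measurableSet_Ioi)]
    exact Finset.prod_congr rfl fun j hj => by
      rw [← hdist j, Measure.map_apply (hmeas j) measurableSet_Ioi]
  simp only [hslice]
  set s : ℝ := ∑ j ∈ T, t j with hs
  have hs0 : 0 ≤ s := Finset.sum_nonneg fun j _ => ht j
  have hcong : ∫⁻ x, ∏ j ∈ T, expMeasure 1 (Ioi (t j * x)) ∂(expMeasure 1)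
      = ∫⁻ x, ENNReal.ofReal (exp (-(s * x))) ∂(expMeasure 1) := by
    refine lintegral_congr_ae (nu_ae_nonneg.mono fun x hx => ?_)
    beta_reduce
    have h1 : ∀ j ∈ T, expMeasure 1 (Ioi (t j * x)) = ENNReal.ofReal (exp (-(t j * x))) :=
      fun j _ => nu_Ioi (mul_nonneg (ht j) hx)
    rw [Finset.prod_congr rfl h1, ← ENNReal.ofReal_prod_of_nonneg
      (fun j _ => (exp_pos _).le), ← Real.exp_sum]
    congr 2
    rw [hs, Finset.sum_mul, Finset.sum_neg_distrib]
  rw [hcong, lint_exp s hs0]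

lemma pointwise {n : ℕ} (hn : 2 ≤ n) {p ε : ℝ} (hp : 1 ≤ p) (hε : 0 < ε)
    (z : Fin n → ℝ) (hz : ∀ i, 0 ≤ z i) (k : Fin n)
    (hlt : ∀ j, j ≠ k → (1 + ε) * z j ^ p < z k ^ p) :
    ¬ ((⨆ i, z i) ^ p ≤ (1 + ε) * (⨅ i, ⨆ j : {j : Fin n // j ≠ i}, z j.1) ^ p) := by
  intro h
  haveI : Nontrivial (Fin n) := Fin.nontrivial_iff_two_le.mpr hn
  have hp0 : 0 ≤ p := by linarith
  have hne : ∀ i : Fin n, Nonempty {j : Fin n // j ≠ i} := fun i =>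
    (exists_ne i).elim fun j hj => ⟨⟨j, hj⟩⟩
  have hbdd : ∀ i : Fin n, BddAbove (Set.range fun j : {j : Fin n // j ≠ i} => z j.1) :=
    fun i => (Set.finite_range _).bddAbove
  set W : Fin n → ℝ := fun i => ⨆ j : {j : Fin n // j ≠ i}, z j.1 with hWdef
  have hW0 : ∀ i, 0 ≤ W i := fun i => by
    obtain ⟨j⟩ := hne i
    exact le_trans (hz j.1) (le_ciSup (hbdd i) j)
  set Z2 : ℝ := ⨅ i, W i with hZ2def
  have hZ2W : Z2 ≤ W k := ciInf_le (Set.finite_range W).bddBelow k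
  have hZ20 : 0 ≤ Z2 := le_ciInf hW0
  haveI := hne k
  obtain ⟨j0, hj0⟩ := exists_eq_ciSup_of_finite (f := fun j : {j : Fin n // j ≠ k} => z j.1)
  have hZ1 : z k ≤ ⨆ i, z i := le_ciSup (Set.finite_range z).bddAbove k
  have c1 : z k ^ p ≤ (⨆ i, z i) ^ p := Real.rpow_le_rpow (hz k) hZ1 hp0
  have c2 : (1 + ε) * z j0.1 ^ p < z k ^ p := hlt j0.1 j0.2
  have c3 : Z2 ^ p ≤ z j0.1 ^ p := by
    rw [hj0]; exact Real.rpow_le_rpow hZ20 hZ2W hp0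
  have c4 : (1 + ε) * Z2 ^ p ≤ (1 + ε) * z j0.1 ^ p :=
    mul_le_mul_of_nonneg_left c3 (by linarith)
  linarith

/-- **anti-concentration.** Let `n ≥ 2`, `p ≥ 1`, and let `f ∈ ℝⁿ` have at
least two nonzero coordinates.  With `z i = |f i| / (e i) ^ (1/p)` built from independent
rate-1 exponentials, let `Z₁` be the largest and `Z₂` the second-largest value among the
`z i` (the second-largest being `⨅ i, ⨆ j ≠ i, z j`).  Then for every `ε > 0`,
`Pr[Z₁ ^ p ≤ (1+ε) · Z₂ ^ p] ≤ ε`, and consequently for every `ε ∈ (0,1]`,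
`Pr[Z₁ ≤ (1+ε) · Z₂] ≤ (1+ε) ^ p − 1`. -/
theorem exponential_anti_concentration
    {Ω : Type*} [MeasurableSpace Ω] (μ : Measure Ω) [IsProbabilityMeasure μ]
    (n : ℕ) (hn : 2 ≤ n) (p : ℝ) (hp : 1 ≤ p)
    (f : Fin n → ℝ) (hf : ∃ i j : Fin n, i ≠ j ∧ f i ≠ 0 ∧ f j ≠ 0)
    (e : Fin n → Ω → ℝ) (hmeas : ∀ i, Measurable (e i))
    (hindep : iIndepFun e μ)
    (hdist : ∀ i, Measure.map (e i) μ = expMeasure 1) :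
    (∀ ε : ℝ, 0 < ε →
      μ {ω | (⨆ i : Fin n, |f i| / (e i ω) ^ (1 / p)) ^ p ≤
          (1 + ε) *
            (⨅ i : Fin n, ⨆ j : {j : Fin n // j ≠ i}, |f j.1| / (e j.1 ω) ^ (1 / p)) ^ p}
        ≤ ENNReal.ofReal ε) ∧
    (∀ ε : ℝ, 0 < ε → ε ≤ 1 →
      μ {ω | (⨆ i : Fin n, |f i| / (e i ω) ^ (1 / p)) ≤
          (1 + ε) *
            (⨅ i : Fin n, ⨆ j : {j : Fin n // j ≠ i}, |f j.1| / (e j.1 ω) ^ (1 / p))}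
        ≤ ENNReal.ofReal ((1 + ε) ^ p - 1)) := by
  classical
  obtain ⟨i0, j0, hij, hfi0, hfj0⟩ := hf
  have hplt : (0:ℝ) < p := lt_of_lt_of_le one_pos hp
  set lam : Fin n → ℝ := fun i => |f i| ^ p with hlamdef
  have hlam0 : ∀ i, 0 ≤ lam i := fun i => Real.rpow_nonneg (abs_nonneg _) p
  have hlampos : ∀ i, f i ≠ 0 → 0 < lam i := fun i hi =>
    Real.rpow_pos_of_pos (abs_pos.mpr hi) p
  set S : Finset (Fin n) := Finset.univ.filter (fun i => f i ≠ 0) with hSdef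
  have hkS : ∀ k ∈ S, f k ≠ 0 := fun k hk => by
    simpa [hSdef] using hk
  set Λ : ℝ := ∑ i, lam i with hΛdef
  have hΛpos : 0 < Λ :=
    Finset.sum_pos' (fun i _ => hlam0 i) ⟨i0, Finset.mem_univ i0, hlampos i0 hfi0⟩
  have hlamle : ∀ k, lam k ≤ Λ := fun k =>
    Finset.single_le_sum (fun i _ => hlam0 i) (Finset.mem_univ k)
  -- the a.s. positivity set
  set G : Set Ω := {ω | ∀ i, 0 < e i ω} with hGdef
  have hGmeas : MeasurableSet G := by
    have : G = ⋂ i, {ω | 0 < e i ω} := by ext ω; simp [hGdef]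
    rw [this]
    exact MeasurableSet.iInter fun i => measurableSet_lt measurable_const (hmeas i)
  have hGc : μ Gᶜ = 0 := by
    have : Gᶜ ⊆ ⋃ i, e i ⁻¹' (Iic 0) := by
      intro ω hω
      simp only [hGdef, mem_compl_iff, mem_setOf_eq, not_forall, not_lt] at hω
      obtain ⟨i, hi⟩ := hω
      exact Set.mem_iUnion.mpr ⟨i, hi⟩
    refine measure_mono_null this (measure_iUnion_null fun i => ?_)
    rw [← Measure.map_apply (hmeas i) measurableSet_Iic, hdist i, nu_Iic]
    simp
  -- the fundamental estimate
  have main : ∀ ε : ℝ, 0 < ε →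
      μ {ω | (⨆ i : Fin n, |f i| / (e i ω) ^ (1 / p)) ^ p ≤
          (1 + ε) *
            (⨅ i : Fin n, ⨆ j : {j : Fin n // j ≠ i}, |f j.1| / (e j.1 ω) ^ (1 / p)) ^ p}
        ≤ ENNReal.ofReal ε := by
    intro ε hε
    set A : Set Ω := {ω | (⨆ i : Fin n, |f i| / (e i ω) ^ (1 / p)) ^ p ≤
          (1 + ε) *
            (⨅ i : Fin n, ⨆ j : {j : Fin n // j ≠ i}, |f j.1| / (e j.1 ω) ^ (1 / p)) ^ p}
      with hAdef
    set t : Fin n → Fin n → ℝ := fun k j => (1 + ε) * lam j / lam k with htdef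
    have ht : ∀ k j, 0 ≤ t k j := fun k j =>
      div_nonneg (mul_nonneg (by linarith) (hlam0 j)) (hlam0 k)
    set D : Fin n → Set Ω := fun k => {ω | ∀ j, j ≠ k → t k j * e k ω < e j ω} with hDdef
    have hDmeas : ∀ k, MeasurableSet (D k) := by
      intro k
      have : D k = ⋂ j, ⋂ (_ : j ≠ k), {ω | t k j * e k ω < e j ω} := by
        ext ω; simp [hDdef]
      rw [this]
      exact MeasurableSet.iInter fun j => MeasurableSet.iInter fun _ =>
        measurableSet_lt ((hmeas k).const_mul _) (hmeas j)
    have hDval : ∀ k, μ (D k)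
        = ENNReal.ofReal (1 / (1 + ∑ j ∈ Finset.univ.erase k, t k j)) := fun k =>
      core μ e hmeas hindep hdist k (t k) (ht k)
    -- lower bound on each μ (D k), k ∈ S
    have hbound : ∀ k ∈ S, ENNReal.ofReal (lam k / ((1 + ε) * Λ)) ≤ μ (D k) := by
      intro k hk
      have hlk : 0 < lam k := hlampos k (hkS k hk)
      have hsum : (∑ j ∈ Finset.univ.erase k, t k j) = (1 + ε) * (Λ - lam k) / lam k := by
        have herase : (∑ j ∈ Finset.univ.erase k, lam j) = Λ - lam k :=
          eq_sub_of_add_eq (Finset.sum_erase_add _ _ (Finset.mem_univ k))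
        simp only [htdef]
        rw [← Finset.sum_div, ← Finset.mul_sum, herase]
      rw [hDval k, hsum]
      apply ENNReal.ofReal_le_ofReal
      have hΛk : 0 ≤ Λ - lam k := by linarith [hlamle k]
      have h1 : 1 + (1 + ε) * (Λ - lam k) / lam k
          = (lam k + (1 + ε) * (Λ - lam k)) / lam k := by field_simp
      rw [h1, one_div_div]
      have hd1 : 0 < lam k + (1 + ε) * (Λ - lam k) := by nlinarith
      have hd2 : lam k + (1 + ε) * (Λ - lam k) ≤ (1 + ε) * Λ := by nlinarith
      gcongr
    -- pairwise disjointness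
    have hdisj : (S : Set (Fin n)).PairwiseDisjoint (fun k => D k ∩ G) := by
      intro k hk k' hk' hkk'
      refine Set.disjoint_left.mpr fun ω hω hω' => ?_
      obtain ⟨hDk, hG⟩ := hω
      obtain ⟨hDk', _⟩ := hω'
      have hlk : 0 < lam k := hlampos k (hkS k hk)
      have hlk' : 0 < lam k' := hlampos k' (hkS k' hk')
      have h1 : t k k' * e k ω < e k' ω := hDk k' (Ne.symm hkk')
      have h2 : t k' k * e k' ω < e k ω := hDk' k hkk'
      simp only [htdef] at h1 h2
      rw [div_mul_eq_mul_div, div_lt_iff₀ hlk] at h1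
      rw [div_mul_eq_mul_div, div_lt_iff₀ hlk'] at h2
      have hek : 0 < e k ω := hG k
      have hek' : 0 < e k' ω := hG k'
      have hm := mul_lt_mul'' h1 h2 (by positivity) (by positivity)
      have hX : 0 < lam k * lam k' * (e k ω * e k' ω) := by positivity
      nlinarith [hm, hX, mul_pos hε hX, mul_nonneg (mul_nonneg hε.le hε.le) hX.le]
    -- A avoids each D k ∩ G
    have hsub : ∀ k ∈ S, ∀ ω, ω ∈ A → ω ∉ D k ∩ G := by
      intro k hk ω hA ⟨hDk, hG⟩
      have hlk : 0 < lam k := hlampos k (hkS k hk)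
      set z : Fin n → ℝ := fun i => |f i| / (e i ω) ^ (1 / p) with hzdef
      have hz : ∀ i, 0 ≤ z i := fun i =>
        div_nonneg (abs_nonneg _) (Real.rpow_nonneg (hG i).le _)
      have hzp : ∀ i, z i ^ p = lam i / e i ω := by
        intro i
        have hei : (0:ℝ) ≤ e i ω := (hG i).le
        rw [hzdef]
        rw [Real.div_rpow (abs_nonneg _) (Real.rpow_nonneg hei _), hlamdef]
        congr 1
        rw [← Real.rpow_mul hei, one_div_mul_cancel hplt.ne', Real.rpow_one]
      have hlt : ∀ j, j ≠ k → (1 + ε) * z j ^ p < z k ^ p := by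
        intro j hj
        have h1 : t k j * e k ω < e j ω := hDk j hj
        simp only [htdef] at h1
        rw [div_mul_eq_mul_div, div_lt_iff₀ hlk] at h1
        rw [hzp j, hzp k, ← mul_div_assoc, div_lt_div_iff₀ (hG j) (hG k)]
        nlinarith
      exact pointwise hn hp hε z hz k hlt hA
    -- assemble the union bound
    set U : Set Ω := ⋃ k ∈ S, (D k ∩ G) with hUdef
    have hUmeas : MeasurableSet U :=
      MeasurableSet.biUnion S.countable_toSet fun k _ => (hDmeas k).inter hGmeas
    have hAU : A ⊆ Uᶜ := by
      intro ω hω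
      simp only [hUdef, mem_compl_iff, Set.mem_iUnion, not_exists]
      exact fun k hk hmem => hsub k hk ω hω hmem
    have hUval : μ U = ∑ k ∈ S, μ (D k) := by
      rw [hUdef, measure_biUnion_finset hdisj fun k _ => (hDmeas k).inter hGmeas]
      exact Finset.sum_congr rfl fun k _ => measure_inter_conull hGc
    have hUge : ENNReal.ofReal (1 / (1 + ε)) ≤ μ U := by
      rw [hUval]
      have hsumS : ∑ k ∈ S, lam k / ((1 + ε) * Λ) = 1 / (1 + ε) := by
        rw [← Finset.sum_div]
        have : ∑ k ∈ S, lam k = Λ := by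
          rw [hΛdef]
          refine Finset.sum_subset (Finset.filter_subset _ _) fun i _ hi => ?_
          have : f i = 0 := by simpa [hSdef] using hi
          simp [hlamdef, this, Real.zero_rpow hplt.ne']
        rw [this]
        rw [eq_div_iff (by positivity)]
        field_simp
      calc ENNReal.ofReal (1 / (1 + ε)) = ENNReal.ofReal (∑ k ∈ S, lam k / ((1 + ε) * Λ)) := by
            rw [hsumS]
        _ = ∑ k ∈ S, ENNReal.ofReal (lam k / ((1 + ε) * Λ)) :=
            ENNReal.ofReal_sum_of_nonneg fun k _ => by positivity
        _ ≤ ∑ k ∈ S, μ (D k) := Finset.sum_le_sum fun k hk => hbound k hk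
    calc μ A ≤ μ Uᶜ := measure_mono hAU
      _ = 1 - μ U := by rw [measure_compl hUmeas (measure_ne_top _ _), measure_univ]
      _ ≤ 1 - ENNReal.ofReal (1 / (1 + ε)) := tsub_le_tsub_left hUge 1
      _ = ENNReal.ofReal (1 - 1 / (1 + ε)) := by
          rw [← ENNReal.ofReal_one, ← ENNReal.ofReal_sub _ (by positivity)]
      _ ≤ ENNReal.ofReal ε := by
          apply ENNReal.ofReal_le_ofReal
          have h0 : (0:ℝ) < 1 + ε := by linarith
          have heq : 1 - 1 / (1 + ε) = ε / (1 + ε) := by field_simp; ring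
          rw [heq]
          exact div_le_self hε.le (by linarith)
  refine ⟨main, ?_⟩
  intro ε hε hε1
  set ε' : ℝ := (1 + ε) ^ p - 1 with hε'def
  have hεp : (1:ℝ) < (1 + ε) ^ p :=
    Real.one_lt_rpow_iff_of_pos (by linarith) |>.mpr (Or.inl ⟨by linarith, hplt⟩)
  have hε' : 0 < ε' := by simp [hε'def]; linarith
  have key := main ε' hε'
  have h1ε' : 1 + ε' = (1 + ε) ^ p := by rw [hε'def]; ring
  rw [h1ε'] at key
  refine le_trans ?_ key
  have hsub : {ω | (⨆ i : Fin n, |f i| / (e i ω) ^ (1 / p)) ≤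
      (1 + ε) * (⨅ i : Fin n, ⨆ j : {j : Fin n // j ≠ i}, |f j.1| / (e j.1 ω) ^ (1 / p))}
      ⊆ {ω | (⨆ i : Fin n, |f i| / (e i ω) ^ (1 / p)) ^ p ≤
        (1 + ε) ^ p *
          (⨅ i : Fin n, ⨆ j : {j : Fin n // j ≠ i}, |f j.1| / (e j.1 ω) ^ (1 / p)) ^ p}
      ∪ Gᶜ := by
    intro ω hω
    by_cases hG : ω ∈ G
    · left
      simp only [mem_setOf_eq] at hω ⊢
      haveI : Nontrivial (Fin n) := Fin.nontrivial_iff_two_le.mpr hn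
      set z : Fin n → ℝ := fun i => |f i| / (e i ω) ^ (1 / p) with hzdef
      have hz : ∀ i, 0 ≤ z i := fun i =>
        div_nonneg (abs_nonneg _) (Real.rpow_nonneg (hG i).le _)
      have hZ10 : 0 ≤ ⨆ i, z i :=
        le_trans (hz i0) (le_ciSup (Set.finite_range z).bddAbove i0)
      have hZ20 : 0 ≤ ⨅ i, ⨆ j : {j : Fin n // j ≠ i}, z j.1 := by
        refine le_ciInf fun i => ?_
        obtain ⟨j, hj⟩ := exists_ne i
        exact le_trans (hz j) (le_ciSup (f := fun j : {j : Fin n // j ≠ i} => z j.1)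
          (Set.finite_range _).bddAbove ⟨j, hj⟩)
      calc (⨆ i, z i) ^ p ≤ ((1 + ε) * (⨅ i, ⨆ j : {j : Fin n // j ≠ i}, z j.1)) ^ p :=
            Real.rpow_le_rpow hZ10 hω (by linarith)
        _ = (1 + ε) ^ p * (⨅ i, ⨆ j : {j : Fin n // j ≠ i}, z j.1) ^ p :=
            Real.mul_rpow (by linarith) hZ20
    · right; exact hG
  calc μ _ ≤ μ ({ω | (⨆ i : Fin n, |f i| / (e i ω) ^ (1 / p)) ^ p ≤
        (1 + ε) ^ p *
          (⨅ i : Fin n, ⨆ j : {j : Fin n // j ≠ i}, |f j.1| / (e j.1 ω) ^ (1 / p)) ^ p}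
      ∪ Gᶜ) := measure_mono hsub
    _ ≤ μ {ω | (⨆ i : Fin n, |f i| / (e i ω) ^ (1 / p)) ^ p ≤
        (1 + ε) ^ p *
          (⨅ i : Fin n, ⨆ j : {j : Fin n // j ≠ i}, |f j.1| / (e j.1 ω) ^ (1 / p)) ^ p}
        + μ Gᶜ := measure_union_le _ _
    _ = μ {ω | (⨆ i : Fin n, |f i| / (e i ω) ^ (1 / p)) ^ p ≤
        (1 + ε) ^ p *
          (⨅ i : Fin n, ⨆ j : {j : Fin n // j ≠ i}, |f j.1| / (e j.1 ω) ^ (1 / p)) ^ p} := by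
        rw [hGc, add_zero]
end

section
/- Let n ≥ 1, let p > 0, and let f ∈ ℝ^n be a nonzero vector. Let {e_{i,r} : 1 ≤ i ≤ n, r = 1,2,3} be independent rate-1 exponential random variables, and for r = 1,2,3 set H_r = max_{1≤i≤n} |f_i|^p / e_{i,r}. Let C = E[(E_1 E_2 E_3)^{−1/3}] where E_1, E_2, E_3 are independent rate-1 exponentials. Then C ∈ (0,8], E[(H_1 H_2 H_3)^{1/3}] = C · ||f||_p^p, and E[(H_1 H_2 H_3)^{2/3}] ≤ 27 · ||f||_p^{2p}. In particular, (H_1 H_2 H_3)^{1/3}/C is an unbiased estimator of ||f||_p^p with second moment at most (27/C²)·||f||_p^{2p}. -/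
open MeasureTheory ProbabilityTheory Real Set

namespace GeomMeanAux

instance : IsProbabilityMeasure (expMeasure 1) := isProbabilityMeasure_expMeasure one_pos

lemma exp_Iic_zero : expMeasure 1 (Iic 0) = 0 := by
  rw [expMeasure, gammaMeasure, withDensity_apply _ measurableSet_Iic,
    setLIntegral_congr (Iio_ae_eq_Iic (a := (0:ℝ))).symm]
  exact lintegral_gammaPDF_of_nonpos le_rfl

lemma exp_ae_pos : ∀ᵐ y ∂(expMeasure 1), 0 < y := by
  rw [ae_iff]
  have h : {y : ℝ | ¬ 0 < y} = Iic 0 := by ext y; simp [not_lt]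
  rw [h]; exact exp_Iic_zero

lemma exp_Ici {c : ℝ} (hc : 0 ≤ c) :
    expMeasure 1 (Ici c) = ENNReal.ofReal (rexp (-c)) := by
  rw [expMeasure, gammaMeasure, withDensity_apply _ measurableSet_Ici,
    setLIntegral_congr (Ioi_ae_eq_Ici (a := c)).symm]
  have h1 : ∀ x ∈ Ioi c, gammaPDF 1 1 x = ENNReal.ofReal (rexp (-x)) := by
    intro x hx
    have hx0 : 0 ≤ x := le_of_lt (lt_of_le_of_lt hc hx)
    show exponentialPDF 1 x = _
    rw [exponentialPDF_of_nonneg hx0, one_mul, one_mul]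
  rw [setLIntegral_congr_fun measurableSet_Ioi h1,
    ← ofReal_integral_eq_lintegral_ofReal]
  · rw [integral_exp_neg_Ioi]
  · exact (by simpa using exp_neg_integrableOn_Ioi c one_pos : IntegrableOn (fun x => rexp (-x)) (Ioi c))
  · exact Filter.Eventually.of_forall fun x => (exp_pos _).le


lemma exp_cdf_div {S : ℝ} (hS : 0 < S) (t : ℝ) :
    expMeasure 1 {y | S / y ≤ t} = if 0 < t then ENNReal.ofReal (rexp (-(S / t))) else 0 := by
  by_cases ht : 0 < t
  · rw [if_pos ht]
    have hae : {y : ℝ | S / y ≤ t} =ᵐ[expMeasure 1] Ici (S / t) := by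
      filter_upwards [exp_ae_pos] with y hy
      have : S / y ≤ t ↔ S / t ≤ y := by
        rw [div_le_iff₀ hy, div_le_iff₀ ht, mul_comm]
      exact eq_iff_iff.2 this
    rw [measure_congr hae, exp_Ici (by positivity)]
  · rw [if_neg ht]
    push_neg at ht
    have hae : {y : ℝ | S / y ≤ t} =ᵐ[expMeasure 1] (∅ : Set ℝ) := by
      filter_upwards [exp_ae_pos] with y hy
      exact eq_iff_iff.2 (iff_of_false (not_le.2 (lt_of_le_of_lt ht (div_pos hS hy))) not_false)
    rw [measure_congr hae, measure_empty]

lemma exp_lint_rpow {s : ℝ} (hs : -1 < s) :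
    ∫⁻ y, ENNReal.ofReal (y ^ s) ∂(expMeasure 1) = ENNReal.ofReal (Real.Gamma (s + 1)) := by
  have hpdf : Measurable (exponentialPDF 1) :=
    (measurable_exponentialPDFReal 1).ennreal_ofReal
  have hf : Measurable fun y : ℝ => ENNReal.ofReal (y ^ s) :=
    (by fun_prop : Measurable fun y : ℝ => y ^ s).ennreal_ofReal
  rw [show expMeasure 1 = volume.withDensity (exponentialPDF 1) from rfl,
    lintegral_withDensity_eq_lintegral_mul _ hpdf hf]
  have h1 : (fun y => (exponentialPDF 1 * fun y : ℝ => ENNReal.ofReal (y ^ s)) y)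
      =ᵐ[volume] (Ioi (0:ℝ)).indicator (fun y => ENNReal.ofReal (rexp (-y) * y ^ s)) := by
    filter_upwards [compl_mem_ae_iff.2 (volume_singleton (a := (0:ℝ)))] with y hy
    simp only [mem_compl_iff, mem_singleton_iff] at hy
    rcases lt_or_gt_of_ne hy with hneg | hpos
    · rw [indicator_of_notMem (by simp [hneg.not_gt])]
      simp [exponentialPDF_of_neg hneg]
    · rw [indicator_of_mem (mem_Ioi.2 hpos)]
      rw [Pi.mul_apply, exponentialPDF_of_nonneg hpos.le, one_mul, one_mul,
        ← ENNReal.ofReal_mul (exp_pos _).le]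
  rw [lintegral_congr_ae h1, lintegral_indicator measurableSet_Ioi _,
    ← ofReal_integral_eq_lintegral_ofReal]
  · rw [Real.Gamma_eq_integral (by linarith : 0 < s + 1)]
    norm_num
  · have := Real.GammaIntegral_convergent (by linarith : 0 < s + 1)
    exact (by simpa using this : IntegrableOn (fun x => rexp (-x) * x ^ s) (Ioi 0))
  · filter_upwards [self_mem_ae_restrict measurableSet_Ioi] with y hy
    exact mul_nonneg (exp_pos _).le (rpow_nonneg hy.le _)


lemma Gamma_four_thirds_le : Real.Gamma (4 / 3) ≤ 1 := by
  have h := convexOn_Gamma.2 (mem_Ioi.2 one_pos) (mem_Ioi.2 two_pos)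
    (by norm_num : (0:ℝ) ≤ 2/3) (by norm_num : (0:ℝ) ≤ 1/3) (by norm_num)
  simp only [smul_eq_mul, Real.Gamma_one, Real.Gamma_two] at h
  norm_num at h
  convert h using 2 <;> norm_num

lemma Gamma_five_thirds_le : Real.Gamma (5 / 3) ≤ 1 := by
  have h := convexOn_Gamma.2 (mem_Ioi.2 one_pos) (mem_Ioi.2 two_pos)
    (by norm_num : (0:ℝ) ≤ 1/3) (by norm_num : (0:ℝ) ≤ 2/3) (by norm_num)
  simp only [smul_eq_mul, Real.Gamma_one, Real.Gamma_two] at h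
  norm_num at h
  convert h using 2 <;> norm_num

lemma Gamma_third_le : Real.Gamma (1 / 3) ≤ 3 := by
  have h := Real.Gamma_add_one (by norm_num : (1/3 : ℝ) ≠ 0)
  norm_num at h
  -- h : Gamma (1/3 + 1) = 1/3 * Gamma (1/3)  (or with 4/3 on left)
  nlinarith [Gamma_four_thirds_le, Real.Gamma_pos_of_pos (by norm_num : (0:ℝ) < 1/3)]

lemma Gamma_two_thirds_le : Real.Gamma (2 / 3) ≤ 3 / 2 := by
  have h := Real.Gamma_add_one (by norm_num : (2/3 : ℝ) ≠ 0)
  norm_num at h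
  nlinarith [Gamma_five_thirds_le, Real.Gamma_pos_of_pos (by norm_num : (0:ℝ) < 2/3)]

lemma triple_ae_pos :
    ∀ᵐ z ∂((expMeasure 1).prod ((expMeasure 1).prod (expMeasure 1))),
      0 < z.1 ∧ 0 < z.2.1 ∧ 0 < z.2.2 := by
  set ν := expMeasure 1
  have hIic : ν (Iic 0) = 0 := by
    have h := ae_iff.1 exp_ae_pos
    have hset : {y : ℝ | ¬ 0 < y} = Iic 0 := by ext y; simp [not_lt]
    rwa [hset] at h
  have h1 : ∀ᵐ z : ℝ × ℝ × ℝ ∂(ν.prod (ν.prod ν)), 0 < z.1 := by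
    rw [ae_iff]
    have : {z : ℝ × ℝ × ℝ | ¬ 0 < z.1} = (Iic 0) ×ˢ (univ : Set (ℝ × ℝ)) := by
      ext z; simp [not_lt]
    rw [this, Measure.prod_prod, hIic, zero_mul]
  have h2 : ∀ᵐ z : ℝ × ℝ × ℝ ∂(ν.prod (ν.prod ν)), 0 < z.2.1 := by
    rw [ae_iff]
    have : {z : ℝ × ℝ × ℝ | ¬ 0 < z.2.1} = (univ : Set ℝ) ×ˢ ((Iic 0) ×ˢ (univ : Set ℝ)) := by
      ext z; simp [not_lt]
    rw [this, Measure.prod_prod, Measure.prod_prod, hIic, zero_mul, mul_zero]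
  have h3 : ∀ᵐ z : ℝ × ℝ × ℝ ∂(ν.prod (ν.prod ν)), 0 < z.2.2 := by
    rw [ae_iff]
    have : {z : ℝ × ℝ × ℝ | ¬ 0 < z.2.2} = (univ : Set ℝ) ×ˢ ((univ : Set ℝ) ×ˢ (Iic 0)) := by
      ext z; simp [not_lt]
    rw [this, Measure.prod_prod, Measure.prod_prod, hIic, mul_zero, mul_zero]
  filter_upwards [h1, h2, h3] with z hz1 hz2 hz3
  exact ⟨hz1, hz2, hz3⟩

lemma triple_int {q : ℝ} (h0 : 0 < q) (h1 : q < 1) :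
    ∫ z : ℝ × ℝ × ℝ, (z.1 * z.2.1 * z.2.2) ^ (-q)
        ∂((expMeasure 1).prod ((expMeasure 1).prod (expMeasure 1))) =
      Real.Gamma (1 - q) ^ 3 := by
  set ν := expMeasure 1
  set νt := ν.prod (ν.prod ν) with hνt
  have hmeas : Measurable fun z : ℝ × ℝ × ℝ => (z.1 * z.2.1 * z.2.2) ^ (-q) := by fun_prop
  have hnn : 0 ≤ᵐ[νt] fun z : ℝ × ℝ × ℝ => (z.1 * z.2.1 * z.2.2) ^ (-q) := by
    filter_upwards [triple_ae_pos] with z hz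
    exact rpow_nonneg (mul_nonneg (mul_nonneg hz.1.le hz.2.1.le) hz.2.2.le) _
  rw [integral_eq_lintegral_of_nonneg_ae hnn hmeas.aestronglyMeasurable]
  have hcong : (fun z : ℝ × ℝ × ℝ => ENNReal.ofReal ((z.1 * z.2.1 * z.2.2) ^ (-q)))
      =ᵐ[νt] fun z => ENNReal.ofReal (z.1 ^ (-q)) *
        (ENNReal.ofReal (z.2.1 ^ (-q)) * ENNReal.ofReal (z.2.2 ^ (-q))) := by
    filter_upwards [triple_ae_pos] with z hz
    obtain ⟨hz1, hz2, hz3⟩ := hz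
    rw [Real.mul_rpow (mul_nonneg hz1.le hz2.le) hz3.le, Real.mul_rpow hz1.le hz2.le,
      ENNReal.ofReal_mul (mul_nonneg (rpow_nonneg hz1.le _) (rpow_nonneg hz2.le _)),
      ENNReal.ofReal_mul (rpow_nonneg hz1.le _), mul_assoc]
  rw [lintegral_congr_ae hcong]
  have hq : -1 < -q := by linarith
  have hm1 : Measurable fun y : ℝ => y ^ (-q) := by fun_prop
  have haem : AEMeasurable (fun y : ℝ => ENNReal.ofReal (y ^ (-q))) ν :=
    (hm1.ennreal_ofReal).aemeasurable
  have hm2 : Measurable fun w : ℝ × ℝ =>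
      ENNReal.ofReal (w.1 ^ (-q)) * ENNReal.ofReal (w.2 ^ (-q)) := by
    exact ((hm1.comp measurable_fst).ennreal_ofReal).mul
      ((hm1.comp measurable_snd).ennreal_ofReal)
  rw [lintegral_prod_mul haem hm2.aemeasurable, lintegral_prod_mul haem haem,
    exp_lint_rpow hq]
  have h1q : -q + 1 = 1 - q := by ring
  rw [h1q]
  have hΓ : 0 ≤ Real.Gamma (1 - q) := (Real.Gamma_pos_of_pos (by linarith)).le
  rw [← ENNReal.ofReal_mul hΓ, ← ENNReal.ofReal_mul hΓ, ENNReal.toReal_ofReal (by positivity)]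
  ring


end GeomMeanAux

open GeomMeanAux

/-- **unbiased `F_p` estimator via geometric means.** Let `n ≥ 1`, `p > 0`,
and let `f ∈ ℝⁿ` be nonzero.  Let `{e (i, r)}` (for `i < n`, `r < 3`) be independent
rate-1 exponentials, and for each `r` set `H r = max_i |f i| ^ p / e (i, r)`.  Let
`C = E[(E₁ E₂ E₃) ^ (-1/3)]` for independent rate-1 exponentials `E₁, E₂, E₃` (expressed
as an integral against the triple product of `expMeasure 1`).  Then `C ∈ (0, 8]`,
`E[(H₀ H₁ H₂) ^ (1/3)] = C · ‖f‖_p ^ p`, and `E[(H₀ H₁ H₂) ^ (2/3)] ≤ 27 · ‖f‖_p ^ (2p)`;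
in particular `(H₀ H₁ H₂) ^ (1/3) / C` is an unbiased estimator of `‖f‖_p ^ p` with
second moment at most `(27 / C²) · ‖f‖_p ^ (2p)`. -/
theorem geometric_mean_fp_estimator
    {Ω : Type*} [MeasurableSpace Ω] (μ : Measure Ω) [IsProbabilityMeasure μ]
    (n : ℕ) (hn : 1 ≤ n) (p : ℝ) (hp : 0 < p)
    (f : Fin n → ℝ) (hf : f ≠ 0)
    (e : Fin n × Fin 3 → Ω → ℝ) (hmeas : ∀ i, Measurable (e i))
    (hindep : iIndepFun e μ)
    (hdist : ∀ i, Measure.map (e i) μ = expMeasure 1)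
    (H : Fin 3 → Ω → ℝ) (hH : ∀ r ω, H r ω = ⨆ i : Fin n, |f i| ^ p / e (i, r) ω)
    (C : ℝ)
    (hC : C = ∫ x : ℝ × ℝ × ℝ, (x.1 * x.2.1 * x.2.2) ^ (-(1 / 3) : ℝ)
        ∂((expMeasure 1).prod ((expMeasure 1).prod (expMeasure 1)))) :
    (0 < C ∧ C ≤ 8) ∧
      (∫ ω, (H 0 ω * H 1 ω * H 2 ω) ^ ((1 : ℝ) / 3) ∂μ = C * ∑ i, |f i| ^ p) ∧
      (∫ ω, (H 0 ω * H 1 ω * H 2 ω) ^ ((2 : ℝ) / 3) ∂μ ≤ 27 * (∑ i, |f i| ^ p) ^ 2) ∧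
      (∫ ω, (H 0 ω * H 1 ω * H 2 ω) ^ ((1 : ℝ) / 3) / C ∂μ = ∑ i, |f i| ^ p) ∧
      (∫ ω, ((H 0 ω * H 1 ω * H 2 ω) ^ ((1 : ℝ) / 3) / C) ^ 2 ∂μ ≤
        27 / C ^ 2 * (∑ i, |f i| ^ p) ^ 2) := by
  classical
  have hn' : Nonempty (Fin n) := ⟨⟨0, hn⟩⟩
  have ha : ∀ i, (0:ℝ) ≤ |f i| ^ p := fun i => rpow_nonneg (abs_nonneg _) p
  obtain ⟨i₀, hi₀⟩ : ∃ i, f i ≠ 0 := by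
    by_contra h; push_neg at h; exact hf (funext h)
  have hai₀ : (0:ℝ) < |f i₀| ^ p := rpow_pos_of_pos (abs_pos.mpr hi₀) p
  set S : ℝ := ∑ i, |f i| ^ p with hS_def
  have hS : 0 < S := Finset.sum_pos' (fun i _ => ha i) ⟨i₀, Finset.mem_univ _, hai₀⟩
  haveI : IsProbabilityMeasure (expMeasure 1) := isProbabilityMeasure_expMeasure one_pos
  set ν : Measure ℝ := expMeasure 1 with hν
  set νt : Measure (ℝ × ℝ × ℝ) := ν.prod (ν.prod ν) with hνt
  -- measurability of H
  have hHmeas : ∀ r, Measurable (H r) := by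
    intro r
    have h1 : H r = fun ω => ⨆ i, |f i| ^ p / e (i, r) ω := funext fun ω => hH r ω
    rw [h1]
    exact Measurable.iSup fun i => measurable_const.div (hmeas (i, r))
  -- a.e. positivity of coordinates
  have hepos : ∀ᵐ ω ∂μ, ∀ q : Fin n × Fin 3, 0 < e q ω := by
    rw [ae_all_iff]
    intro q
    have h2 : ∀ᵐ y ∂(Measure.map (e q) μ), 0 < y := by
      rw [hdist q]; exact exp_ae_pos
    exact (ae_map_iff (hmeas q).aemeasurable measurableSet_Ioi).1 h2
  -- characterization of {H r ≤ t}
  have hH_le : ∀ (r : Fin 3) (t : ℝ) (ω : Ω), (∀ q, 0 < e q ω) →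
      (H r ω ≤ t ↔
        ∀ i, e (i, r) ω ∈ (if 0 < t then Ici (|f i| ^ p / t) else (∅ : Set ℝ))) := by
    intro r t ω hω
    rw [hH]
    have hbdd : BddAbove (Set.range fun i => |f i| ^ p / e (i, r) ω) :=
      Set.Finite.bddAbove (Set.finite_range _)
    by_cases ht : 0 < t
    · simp only [if_pos ht, mem_Ici]
      rw [ciSup_le_iff hbdd]
      refine forall_congr' fun i => ?_
      rw [div_le_iff₀ (hω (i, r)), div_le_iff₀ ht, mul_comm]
    · push_neg at ht
      apply iff_of_false
      · rw [not_le]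
        refine lt_of_lt_of_le ?_ (le_ciSup hbdd i₀)
        exact lt_of_le_of_lt ht (div_pos hai₀ (hω (i₀, r)))
      · intro h
        have := h i₀
        rw [if_neg (not_lt.2 ht)] at this
        exact this
  -- a.e. positivity of H
  have hHpos : ∀ᵐ ω ∂μ, ∀ r, 0 < H r ω := by
    filter_upwards [hepos] with ω hω r
    rw [hH]
    have hbdd : BddAbove (Set.range fun i => |f i| ^ p / e (i, r) ω) :=
      Set.Finite.bddAbove (Set.finite_range _)
    exact lt_of_lt_of_le (div_pos hai₀ (hω (i₀, r))) (le_ciSup hbdd i₀)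
  set G : Ω → ℝ × ℝ × ℝ := fun ω => (H 0 ω, H 1 ω, H 2 ω) with hG
  set F : ℝ × ℝ × ℝ → ℝ × ℝ × ℝ := fun y => (S / y.1, S / y.2.1, S / y.2.2) with hF
  have hGmeas : Measurable G := (hHmeas 0).prodMk ((hHmeas 1).prodMk (hHmeas 2))
  have hFmeas : Measurable F :=
    (measurable_const.div measurable_fst).prodMk
      ((measurable_const.div (measurable_fst.comp measurable_snd)).prodMk
        (measurable_const.div (measurable_snd.comp measurable_snd)))
  -- rectangle computation for G
  have hmain : ∀ t1 t2 t3 : ℝ,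
      μ (G ⁻¹' (Iic t1 ×ˢ Iic t2 ×ˢ Iic t3)) =
      (if 0 < t1 then ENNReal.ofReal (rexp (-(S / t1))) else 0) *
        ((if 0 < t2 then ENNReal.ofReal (rexp (-(S / t2))) else 0) *
          (if 0 < t3 then ENNReal.ofReal (rexp (-(S / t3))) else 0)) := by
    intro t1 t2 t3
    set t : Fin 3 → ℝ := ![t1, t2, t3] with htdef
    set s' : Fin n × Fin 3 → Set ℝ :=
      fun q => if 0 < t q.2 then Ici (|f q.1| ^ p / t q.2) else ∅ with hs'
    have hs'meas : ∀ q, MeasurableSet (s' q) := by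
      intro q
      by_cases h : 0 < t q.2 <;> simp [hs', h]
    have haeeq : G ⁻¹' (Iic t1 ×ˢ Iic t2 ×ˢ Iic t3) =ᵐ[μ] ⋂ q, e q ⁻¹' s' q := by
      filter_upwards [hepos] with ω hω
      refine eq_iff_iff.2 ?_
      show ω ∈ G ⁻¹' (Iic t1 ×ˢ Iic t2 ×ˢ Iic t3) ↔ ω ∈ ⋂ q, e q ⁻¹' s' q
      simp only [mem_preimage, hG, mem_prod, mem_Iic, mem_iInter]
      rw [hH_le 0 t1 ω hω, hH_le 1 t2 ω hω, hH_le 2 t3 ω hω]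
      constructor
      · rintro ⟨h0, h1, h2⟩ ⟨i, r⟩
        simp only [hs']
        fin_cases r
        · simpa [htdef] using h0 i
        · simpa [htdef] using h1 i
        · simpa [htdef] using h2 i
      · intro h
        refine ⟨fun i => ?_, fun i => ?_, fun i => ?_⟩
        · exact h (i, 0)
        · exact h (i, 1)
        · exact h (i, 2)
    rw [measure_congr haeeq]
    have hprod := hindep.meas_iInter (s := fun q => e q ⁻¹' s' q)
      (fun q => ⟨s' q, hs'meas q, rfl⟩)
    rw [hprod]
    have hone : ∀ q : Fin n × Fin 3, μ (e q ⁻¹' s' q) =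
        if 0 < t q.2 then ENNReal.ofReal (rexp (-(|f q.1| ^ p / t q.2))) else 0 := by
      intro q
      rw [← Measure.map_apply (hmeas q) (hs'meas q), hdist q]
      by_cases h : 0 < t q.2
      · rw [hs']
        simp only [if_pos h]
        exact exp_Ici (div_nonneg (ha q.1) h.le)
      · rw [hs']
        simp only [if_neg h]
        exact measure_empty
    simp_rw [hone]
    rw [Fintype.prod_prod_type, Finset.prod_comm]
    have hfac : ∀ r : Fin 3,
        (∏ i : Fin n, if 0 < t r then ENNReal.ofReal (rexp (-(|f i| ^ p / t r))) else 0) =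
        if 0 < t r then ENNReal.ofReal (rexp (-(S / t r))) else 0 := by
      intro r
      by_cases h : 0 < t r
      · simp only [if_pos h]
        rw [← ENNReal.ofReal_prod_of_nonneg (fun i _ => (exp_pos _).le), ← Real.exp_sum]
        have hsum : ∑ i : Fin n, -(|f i| ^ p / t r) = -(S / t r) := by
          rw [Finset.sum_neg_distrib, Finset.sum_div]
        rw [hsum]
      · simp only [if_neg h]
        exact Finset.prod_eq_zero (Finset.mem_univ i₀) rfl
    calc (∏ r : Fin 3, ∏ i : Fin n,
          if 0 < t r then ENNReal.ofReal (rexp (-(|f i| ^ p / t r))) else 0)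
        = ∏ r : Fin 3, (if 0 < t r then ENNReal.ofReal (rexp (-(S / t r))) else 0) :=
          Finset.prod_congr rfl fun r _ => hfac r
      _ = _ := by
          rw [Fin.prod_univ_three]
          simp only [htdef, Matrix.cons_val_zero, Matrix.cons_val_one, Matrix.head_cons,
            Matrix.cons_val_two, Matrix.tail_cons]
          ring
  -- π-system machinery
  have hspan : IsCountablySpanning (Set.range (Iic : ℝ → Set ℝ)) := by
    refine ⟨fun k => Iic (k : ℝ), fun k => ⟨k, rfl⟩, ?_⟩
    ext x
    simp only [mem_iUnion, mem_Iic, mem_univ, iff_true]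
    exact exists_nat_ge x
  have hgen1 : MeasurableSpace.generateFrom (Set.range (Iic : ℝ → Set ℝ)) =
      (inferInstance : MeasurableSpace ℝ) :=
    (borel_eq_generateFrom_Iic ℝ).symm.trans (@BorelSpace.measurable_eq ℝ _ _ _).symm
  set C2 : Set (Set (ℝ × ℝ)) :=
    Set.image2 (· ×ˢ ·) (Set.range (Iic : ℝ → Set ℝ)) (Set.range (Iic : ℝ → Set ℝ)) with hC2
  have hgen2 : MeasurableSpace.generateFrom C2 = (inferInstance : MeasurableSpace (ℝ × ℝ)) :=
    generateFrom_eq_prod hgen1 hgen1 hspan hspan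
  have hspan2 : IsCountablySpanning C2 := by
    refine ⟨fun k => Iic (k : ℝ) ×ˢ Iic (k : ℝ),
      fun k => mem_image2_of_mem ⟨k, rfl⟩ ⟨k, rfl⟩, ?_⟩
    ext x
    simp only [mem_iUnion, mem_prod, mem_Iic, mem_univ, iff_true]
    obtain ⟨k1, h1⟩ := exists_nat_ge x.1
    obtain ⟨k2, h2⟩ := exists_nat_ge x.2
    exact ⟨max k1 k2, h1.trans (by exact_mod_cast Nat.cast_le.2 (le_max_left _ _)),
      h2.trans (by exact_mod_cast Nat.cast_le.2 (le_max_right _ _))⟩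
  set C3 : Set (Set (ℝ × ℝ × ℝ)) :=
    Set.image2 (· ×ˢ ·) (Set.range (Iic : ℝ → Set ℝ)) C2 with hC3
  have hgen3 : MeasurableSpace.generateFrom C3 =
      (inferInstance : MeasurableSpace (ℝ × ℝ × ℝ)) :=
    generateFrom_eq_prod hgen1 hgen2 hspan hspan2
  have hpi3 : IsPiSystem C3 := isPiSystem_Iic.prod (isPiSystem_Iic.prod isPiSystem_Iic)
  -- the map identity
  haveI : IsProbabilityMeasure νt := by rw [hνt]; infer_instance
  have hmap : Measure.map G μ = Measure.map F νt := by
    haveI : IsProbabilityMeasure (Measure.map G μ) :=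
      Measure.isProbabilityMeasure_map hGmeas.aemeasurable
    haveI : IsProbabilityMeasure (Measure.map F νt) :=
      Measure.isProbabilityMeasure_map hFmeas.aemeasurable
    refine ext_of_generate_finite C3 hgen3.symm hpi3 ?_ (by simp)
    rintro s ⟨s1, ⟨t1, rfl⟩, s23, ⟨s2, ⟨t2, rfl⟩, s3, ⟨t3, rfl⟩, rfl⟩, rfl⟩
    have hsm : MeasurableSet (Iic t1 ×ˢ Iic t2 ×ˢ Iic t3 : Set (ℝ × ℝ × ℝ)) :=
      measurableSet_Iic.prod (measurableSet_Iic.prod measurableSet_Iic)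
    rw [Measure.map_apply hGmeas hsm, Measure.map_apply hFmeas hsm, hmain t1 t2 t3]
    have hFpre : F ⁻¹' (Iic t1 ×ˢ Iic t2 ×ˢ Iic t3) =
        {y : ℝ | S / y ≤ t1} ×ˢ ({y : ℝ | S / y ≤ t2} ×ˢ {y : ℝ | S / y ≤ t3}) := by
      ext y
      simp only [hF, mem_preimage, mem_prod, mem_Iic, mem_setOf_eq]
    rw [hFpre, hνt, Measure.prod_prod, Measure.prod_prod, hν,
      exp_cdf_div hS t1, exp_cdf_div hS t2, exp_cdf_div hS t3]
  -- key integral identity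
  have key : ∀ c : ℝ, 0 < c → c < 1 →
      ∫ ω, (H 0 ω * H 1 ω * H 2 ω) ^ c ∂μ = S ^ (3 * c) * Real.Gamma (1 - c) ^ 3 := by
    intro c hc0 hc1
    have hφ : Measurable fun z : ℝ × ℝ × ℝ => (z.1 * z.2.1 * z.2.2) ^ c := by fun_prop
    have h1 : ∫ ω, (H 0 ω * H 1 ω * H 2 ω) ^ c ∂μ =
        ∫ z, (z.1 * z.2.1 * z.2.2) ^ c ∂(Measure.map G μ) := by
      rw [integral_map hGmeas.aemeasurable hφ.aestronglyMeasurable]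
    rw [h1, hmap, integral_map hFmeas.aemeasurable hφ.aestronglyMeasurable]
    have h2 : (fun y : ℝ × ℝ × ℝ => ((F y).1 * (F y).2.1 * (F y).2.2) ^ c)
        =ᵐ[νt] fun y => S ^ (3 * c) * (y.1 * y.2.1 * y.2.2) ^ (-c) := by
      have := triple_ae_pos
      rw [← hν, ← hνt] at this
      filter_upwards [this] with y hy
      obtain ⟨hy1, hy2, hy3⟩ := hy
      have hP : 0 < y.1 * y.2.1 * y.2.2 := by positivity
      have hFe : (F y).1 * (F y).2.1 * (F y).2.2 = S ^ (3:ℕ) / (y.1 * y.2.1 * y.2.2) := by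
        simp only [hF]
        field_simp
      rw [hFe, Real.div_rpow (by positivity) hP.le, Real.rpow_neg hP.le,
        ← Real.rpow_natCast S 3, ← Real.rpow_mul hS.le, div_eq_mul_inv]
      norm_num
    rw [integral_congr_ae h2, integral_const_mul]
    have h3 : ∫ y : ℝ × ℝ × ℝ, (y.1 * y.2.1 * y.2.2) ^ (-c) ∂νt =
        Real.Gamma (1 - c) ^ 3 := by
      rw [hνt, hν]; exact triple_int hc0 hc1
    rw [h3]
  -- value of C
  have hCval : C = Real.Gamma (2 / 3) ^ 3 := by
    rw [hC]
    have := triple_int (q := 1/3) (by norm_num) (by norm_num)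
    rw [this]
    norm_num
  have hΓ23pos : 0 < Real.Gamma (2 / 3) := Real.Gamma_pos_of_pos (by norm_num)
  have hCpos : 0 < C := by rw [hCval]; positivity
  have hCle : C ≤ 8 := by
    rw [hCval]
    calc Real.Gamma (2/3) ^ 3 ≤ (3/2) ^ 3 :=
          pow_le_pow_left₀ hΓ23pos.le Gamma_two_thirds_le 3
      _ ≤ 8 := by norm_num
  -- first moment
  have hmom1 : ∫ ω, (H 0 ω * H 1 ω * H 2 ω) ^ ((1:ℝ) / 3) ∂μ = C * S := by
    have hk := key (1/3) (by norm_num) (by norm_num)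
    have h31 : (3:ℝ) * (1/3) = 1 := by norm_num
    have h23 : (1:ℝ) - 1/3 = 2/3 := by norm_num
    rw [hk, hCval, h31, h23, Real.rpow_one, mul_comm]
  -- second moment
  have hΓ13pos : 0 < Real.Gamma (1 / 3) := Real.Gamma_pos_of_pos (by norm_num)
  have hmom2 : ∫ ω, (H 0 ω * H 1 ω * H 2 ω) ^ ((2:ℝ) / 3) ∂μ ≤ 27 * S ^ 2 := by
    have hk := key (2/3) (by norm_num) (by norm_num)
    rw [hk]
    have h32 : (3 : ℝ) * (2/3) = 2 := by norm_num
    rw [h32]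
    have hS2 : S ^ (2:ℝ) = S ^ 2 := by
      rw [← Real.rpow_natCast S 2]; norm_num
    rw [hS2]
    have h13 : (1:ℝ) - 2/3 = 1/3 := by norm_num
    rw [h13]
    have hΓ3 : Real.Gamma (1/3) ^ 3 ≤ 27 := by
      calc Real.Gamma (1/3) ^ 3 ≤ 3 ^ 3 := pow_le_pow_left₀ hΓ13pos.le Gamma_third_le 3
        _ = 27 := by norm_num
    calc S ^ 2 * Real.Gamma (1/3) ^ 3 ≤ S ^ 2 * 27 :=
          mul_le_mul_of_nonneg_left hΓ3 (sq_nonneg S)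
      _ = 27 * S ^ 2 := by ring
  refine ⟨⟨hCpos, hCle⟩, hmom1, hmom2, ?_, ?_⟩
  · rw [integral_div, hmom1, mul_comm, mul_div_assoc, div_self hCpos.ne', mul_one]
  · have haesq : (fun ω => ((H 0 ω * H 1 ω * H 2 ω) ^ ((1:ℝ)/3) / C) ^ 2)
        =ᵐ[μ] fun ω => (H 0 ω * H 1 ω * H 2 ω) ^ ((2:ℝ)/3) / C ^ 2 := by
      filter_upwards [hHpos] with ω hω
      have hx : 0 < H 0 ω * H 1 ω * H 2 ω := by
        have := hω 0; have := hω 1; have := hω 2; positivity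
      rw [div_pow, ← Real.rpow_natCast ((H 0 ω * H 1 ω * H 2 ω) ^ ((1:ℝ)/3)) 2,
        ← Real.rpow_mul hx.le]
      norm_num
    rw [integral_congr_ae haesq, integral_div]
    rw [div_le_iff₀ (by positivity : (0:ℝ) < C ^ 2)]
    calc ∫ ω, (H 0 ω * H 1 ω * H 2 ω) ^ ((2:ℝ)/3) ∂μ ≤ 27 * S ^ 2 := hmom2
      _ = 27 / C ^ 2 * S ^ 2 * C ^ 2 := by field_simp
end

section
/- There exists an absolute constant K such that the following holds. Let a, b > 0, let a_0 ∈ [0.99a, 1.01a] and b_0 ∈ [0.99b, 1.01b], let 0 < ε ≤ 1/100, and let Q ≥ 1 be an integer. Let (â^{(1)}, b̂^{(1)}), …, (â^{(Q)}, b̂^{(Q)}) be mutually independent square-integrable real random variables (all 2Q variables mutually independent) with |E[â^{(l)}] − a| ≤ εa, |E[b̂^{(l)}] − b| ≤ εb, Var(â^{(l)}) ≤ a²/5, and Var(b̂^{(l)}) ≤ b²/5 for each l. Define z = Σ_{q=0}^Q (−1)^q (a_0+b_0)^{−(q+1)} ∏_{l=1}^q ((â^{(l)} − a_0) + (b̂^{(l)}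 − b_0)). Then |E[z] − 1/(a+b)| ≤ K(Qε + (1/40)^Q)/(a+b) and E[z²] ≤ K(Q+1)²/(a+b)². -/
open MeasureTheory ProbabilityTheory Finset

section AuxLemmas
variable {Ω : Type} {mΩ : MeasurableSpace Ω} {μ : Measure Ω}

variable {Ω : Type} {mΩ : MeasurableSpace Ω} {μ : Measure Ω}

lemma my_iIndepFun_congr {ι : Type*} {f g : ι → Ω → ℝ}
    (hf : iIndepFun f μ)
    (h : ∀ i, f i =ᵐ[μ] g i) :
    iIndepFun g μ := by
  rw [iIndepFun_iff_measure_inter_preimage_eq_mul] at hf ⊢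
  intro S sets hsets
  have hae : ∀ᵐ ω ∂μ, ∀ i ∈ S, f i ω = g i ω :=
    (ae_ball_iff S.countable_toSet).2 fun i _ => h i
  have h1 : ∀ i ∈ S, μ (g i ⁻¹' sets i) = μ (f i ⁻¹' sets i) := by
    intro i hi
    refine measure_congr (Filter.eventuallyEq_set.2 ?_)
    filter_upwards [h i] with ω hω
    simp [Set.mem_preimage, hω]
  have h2 : μ (⋂ i ∈ S, g i ⁻¹' sets i) = μ (⋂ i ∈ S, f i ⁻¹' sets i) := by
    refine measure_congr (Filter.eventuallyEq_set.2 ?_)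
    filter_upwards [hae] with ω hω
    simp only [Set.mem_iInter, Set.mem_preimage]
    exact ⟨fun H i hi => (hω i hi) ▸ H i hi, fun H i hi => (hω i hi).symm ▸ H i hi⟩
  rw [h2, hf S hsets]
  exact (Finset.prod_congr rfl h1).symm

lemma my_indep_prod {Q : ℕ} {F : Fin Q ⊕ Fin Q → Ω → ℝ}
    (hF : iIndepFun F μ)
    (hFm : ∀ j, Measurable (F j))
    (h : Fin Q → ℝ → ℝ) (hh : ∀ l, Measurable (h l))
    (c : ℝ) (s : Finset (Fin Q)) {i : Fin Q} (hi : i ∉ s) :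
    IndepFun (fun ω => ∏ l ∈ s, h l (F (.inl l) ω + F (.inr l) ω - c))
      (fun ω => h i (F (.inl i) ω + F (.inr i) ω - c)) μ := by
  classical
  set S : Finset (Fin Q ⊕ Fin Q) := s.image Sum.inl ∪ s.image Sum.inr with hS
  set T : Finset (Fin Q ⊕ Fin Q) := {Sum.inl i, Sum.inr i} with hT
  have hST : Disjoint S T := by
    rw [Finset.disjoint_left]
    rintro j hj hjT
    simp only [hS, Finset.mem_union, Finset.mem_image] at hj
    simp only [hT, Finset.mem_insert, Finset.mem_singleton] at hjT
    rcases hjT with rfl | rfl <;>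
      rcases hj with ⟨l, hl, hlj⟩ | ⟨l, hl, hlj⟩ <;>
        first
          | (cases hlj; exact hi hl)
          | (exact Sum.inl_ne_inr hlj) | (exact Sum.inr_ne_inl hlj) | skip
  have base := hF.indepFun_finset S T hST hFm
  have hSl : ∀ l ∈ s, Sum.inl l ∈ S := fun l hl =>
    Finset.mem_union_left _ (Finset.mem_image_of_mem _ hl)
  have hSr : ∀ l ∈ s, Sum.inr l ∈ S := fun l hl =>
    Finset.mem_union_right _ (Finset.mem_image_of_mem _ hl)
  have hTl : (Sum.inl i : Fin Q ⊕ Fin Q) ∈ T := by simp [hT]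
  have hTr : (Sum.inr i : Fin Q ⊕ Fin Q) ∈ T := by simp [hT]
  let φ : ({x // x ∈ S} → ℝ) → ℝ := fun x =>
    ∏ l ∈ s.attach, h l.1 (x ⟨Sum.inl l.1, hSl l.1 l.2⟩ + x ⟨Sum.inr l.1, hSr l.1 l.2⟩ - c)
  let ψ : ({x // x ∈ T} → ℝ) → ℝ := fun x => h i (x ⟨Sum.inl i, hTl⟩ + x ⟨Sum.inr i, hTr⟩ - c)
  have hφ : Measurable φ :=
    Finset.measurable_prod _ fun l _ =>
      (hh l.1).comp ((((measurable_pi_apply (⟨Sum.inl l.1, hSl l.1 l.2⟩ : {x // x ∈ S}))).add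
        (measurable_pi_apply (⟨Sum.inr l.1, hSr l.1 l.2⟩ : {x // x ∈ S}))).sub measurable_const)
  have hψ : Measurable ψ :=
    (hh i).comp ((((measurable_pi_apply (⟨Sum.inl i, hTl⟩ : {x // x ∈ T}))).add
      (measurable_pi_apply (⟨Sum.inr i, hTr⟩ : {x // x ∈ T}))).sub measurable_const)
  have key := base.comp hφ hψ
  have e1 : (φ ∘ fun a (j : {x // x ∈ S}) => F j a)
      = fun ω => ∏ l ∈ s, h l (F (.inl l) ω + F (.inr l) ω - c) := by
    funext ω
    simp only [Function.comp_apply, φ]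
    exact Finset.prod_attach s (fun l => h l (F (Sum.inl l) ω + F (Sum.inr l) ω - c))
  have e2 : (ψ ∘ fun a (j : {x // x ∈ T}) => F j a)
      = fun ω => h i (F (.inl i) ω + F (.inr i) ω - c) := rfl
  rwa [e1, e2] at key

lemma my_integral_prod [IsProbabilityMeasure μ] {Q : ℕ} {F : Fin Q ⊕ Fin Q → Ω → ℝ}
    (hF : iIndepFun F μ)
    (hFm : ∀ j, Measurable (F j))
    (h : Fin Q → ℝ → ℝ) (hh : ∀ l, Measurable (h l)) (c : ℝ)
    (hint : ∀ l, Integrable (fun ω => h l (F (.inl l) ω + F (.inr l) ω - c)) μ)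
    (s : Finset (Fin Q)) :
    Integrable (fun ω => ∏ l ∈ s, h l (F (.inl l) ω + F (.inr l) ω - c)) μ ∧
      ∫ ω, ∏ l ∈ s, h l (F (.inl l) ω + F (.inr l) ω - c) ∂μ
        = ∏ l ∈ s, ∫ ω, h l (F (.inl l) ω + F (.inr l) ω - c) ∂μ := by
  classical
  induction s using Finset.induction with
  | empty => simp
  | @insert i s hi ih =>
    have hind := (my_indep_prod hF hFm h hh c s hi).symm
    have hmul : (fun ω => h i (F (.inl i) ω + F (.inr i) ω - c))
        * (fun ω => ∏ l ∈ s, h l (F (.inl l) ω + F (.inr l) ω - c))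
        = fun ω => ∏ l ∈ insert i s, h l (F (.inl l) ω + F (.inr l) ω - c) := by
      funext ω
      rw [Finset.prod_insert hi]
      rfl
    have hintg := hind.integrable_mul (hint i) ih.1
    rw [hmul] at hintg
    refine ⟨hintg, ?_⟩
    have := hind.integral_mul_eq_mul_integral (hint i).1 ih.1.1
    rw [hmul] at this
    rw [this, Finset.prod_insert hi, ih.2]

end AuxLemmas


lemma my_prod_sub_pow_le {ι : Type*} (s : Finset ι) (x : ι → ℝ) (y M δ : ℝ)
    (hM : 0 ≤ M) (hδ : 0 ≤ δ) (hy : |y| ≤ M) (hx : ∀ i ∈ s, |x i| ≤ M)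
    (hd : ∀ i ∈ s, |x i - y| ≤ δ) :
    |∏ i ∈ s, x i - y ^ s.card| ≤ s.card * δ * M ^ (s.card - 1) := by
  classical
  induction s using Finset.induction with
  | empty => simp
  | @insert i s hi ih =>
    have hxi := hx i (mem_insert_self i s)
    have hdi := hd i (mem_insert_self i s)
    have ihs := ih (fun j hj => hx j (mem_insert_of_mem hj)) (fun j hj => hd j (mem_insert_of_mem hj))
    rw [Finset.prod_insert hi, Finset.card_insert_of_notMem hi]
    have habs : |x i * ∏ j ∈ s, x j - y ^ (s.card + 1)|
        ≤ |x i| * |∏ j ∈ s, x j - y ^ s.card| + |x i - y| * |y| ^ s.card := by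
      have he : x i * ∏ j ∈ s, x j - y ^ (s.card + 1)
          = x i * (∏ j ∈ s, x j - y ^ s.card) + (x i - y) * y ^ s.card := by ring
      rw [he]
      calc |x i * (∏ j ∈ s, x j - y ^ s.card) + (x i - y) * y ^ s.card|
          ≤ |x i * (∏ j ∈ s, x j - y ^ s.card)| + |(x i - y) * y ^ s.card| := abs_add_le _ _
        _ = |x i| * |∏ j ∈ s, x j - y ^ s.card| + |x i - y| * |y| ^ s.card := by
            rw [abs_mul, abs_mul, abs_pow]
    have hyM : |y| ^ s.card ≤ M ^ s.card := pow_le_pow_left₀ (abs_nonneg _) hy _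
    have hstep : M * (s.card * δ * M ^ (s.card - 1)) ≤ s.card * δ * M ^ s.card := by
      rcases Nat.eq_zero_or_pos s.card with hc | hc
      · simp [hc]
      · have hMM : M * M ^ (s.card - 1) = M ^ s.card := by
          rw [← pow_succ']
          congr 1
          omega
        have hr : M * (↑s.card * δ * M ^ (s.card - 1)) = ↑s.card * δ * (M * M ^ (s.card - 1)) := by
          ring
        rw [hr, hMM]
    calc |x i * ∏ j ∈ s, x j - y ^ (s.card + 1)|
        ≤ |x i| * |∏ j ∈ s, x j - y ^ s.card| + |x i - y| * |y| ^ s.card := habs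
      _ ≤ M * (s.card * δ * M ^ (s.card - 1)) + δ * M ^ s.card := by
          gcongr
      _ ≤ (s.card : ℝ) * δ * M ^ s.card + δ * M ^ s.card := by linarith
      _ = ((s.card + 1 : ℕ) : ℝ) * δ * M ^ ((s.card + 1) - 1) := by
          rw [Nat.add_sub_cancel]
          push_cast
          ring

lemma my_q_pow_le (q : ℕ) : (q : ℝ) * (1 / 40) ^ (q - 1) ≤ 2 * (1 / 2) ^ q := by
  cases q with
  | zero => norm_num
  | succ k =>
    have h1 : (k : ℝ) + 1 ≤ 20 ^ k := by
      have h0 := Nat.lt_two_pow_self (n := k)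
      have h2 : (2 : ℕ) ^ k ≤ 20 ^ k := Nat.pow_le_pow_left (by norm_num) k
      have h3 : k + 1 ≤ 20 ^ k := by omega
      exact_mod_cast h3
    calc ((k + 1 : ℕ) : ℝ) * (1 / 40) ^ ((k + 1) - 1)
        ≤ (20 : ℝ) ^ k * (1 / 40) ^ k := by
          rw [Nat.add_sub_cancel]
          apply mul_le_mul_of_nonneg_right _ (by positivity)
          push_cast; linarith
      _ = (1 / 2) ^ k := by rw [← mul_pow]; norm_num
      _ = 2 * (1 / 2) ^ (k + 1) := by rw [pow_succ]; ring

lemma my_geom_le (r : ℝ) (h0 : 0 ≤ r) (h1 : r < 1) (n : ℕ) :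
    ∑ q ∈ Finset.range n, r ^ q ≤ 1 / (1 - r) := by
  have hne : r ≠ 1 := ne_of_lt h1
  rw [geom_sum_eq hne]
  have h2 : (r ^ n - 1) / (r - 1) = (1 - r ^ n) / (1 - r) := by
    rw [← neg_div_neg_eq]; ring_nf
  rw [h2]
  have h3 : 1 - r ^ n ≤ 1 := by nlinarith [pow_nonneg h0 n]
  have h4 : (0:ℝ) < 1 - r := by linarith
  exact (div_le_div_iff_of_pos_right h4).2 h3

/-- The randomized truncated bivariate Taylor estimator
`z = Σ_{q=0}^Q (−1)^q (a₀+b₀)^{−(q+1)} ∏_{l=1}^q ((A l − a₀) + (B l − b₀))`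
(the product over `l = 1, …, q` being the product over the first `q` of the `Q`
estimator pairs; empty product = 1). -/
noncomputable def bivarTaylorEst {Ω : Type} (a₀ b₀ : ℝ) (Q : ℕ)
    (A B : Fin Q → Ω → ℝ) (ω : Ω) : ℝ :=
  ∑ q ∈ Finset.range (Q + 1),
    (-1 : ℝ) ^ q / (a₀ + b₀) ^ (q + 1) *
      ∏ l ∈ Finset.univ.filter (fun l : Fin Q => (l : ℕ) < q),
        ((A l ω - a₀) + (B l ω - b₀))

set_option maxHeartbeats 2000000 in
/-- **randomized bivariate Taylor estimator for `1/(a+b)`.** There is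
an absolute constant `K` such that: for `a, b > 0`, `a₀ ∈ [0.99a, 1.01a]`,
`b₀ ∈ [0.99b, 1.01b]`, `0 < ε ≤ 1/100`, and `Q ≥ 1`, if the `2Q` square-integrable
random variables `A 1, …, A Q, B 1, …, B Q` are mutually independent with
`|E[A l] − a| ≤ ε a`, `|E[B l] − b| ≤ ε b`, `Var(A l) ≤ a²/5` and `Var(B l) ≤ b²/5`,
then `|E[z] − 1/(a+b)| ≤ K (Q ε + (1/40)^Q)/(a+b)` and `E[z²] ≤ K (Q+1)²/(a+b)²`. -/
theorem randomized_bivariate_taylor_estimator :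
    ∃ K : ℝ, ∀ (Ω : Type) (mΩ : MeasurableSpace Ω) (μ : Measure Ω),
      IsProbabilityMeasure μ →
      ∀ a b a₀ b₀ ε : ℝ, 0 < a → 0 < b →
      0.99 * a ≤ a₀ → a₀ ≤ 1.01 * a → 0.99 * b ≤ b₀ → b₀ ≤ 1.01 * b →
      0 < ε → ε ≤ 1 / 100 →
      ∀ Q : ℕ, 1 ≤ Q →
      ∀ A B : Fin Q → Ω → ℝ,
        iIndepFun
          (Sum.elim A B) μ →
        (∀ l, MemLp (A l) 2 μ) → (∀ l, MemLp (B l) 2 μ) →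
        (∀ l, |(∫ ω, A l ω ∂μ) - a| ≤ ε * a) →
        (∀ l, |(∫ ω, B l ω ∂μ) - b| ≤ ε * b) →
        (∀ l, variance (A l) μ ≤ a ^ 2 / 5) →
        (∀ l, variance (B l) μ ≤ b ^ 2 / 5) →
        |(∫ ω, bivarTaylorEst a₀ b₀ Q A B ω ∂μ) - 1 / (a + b)| ≤
            K * ((Q : ℝ) * ε + (1 / 40) ^ Q) / (a + b) ∧
          ∫ ω, (bivarTaylorEst a₀ b₀ Q A B ω) ^ 2 ∂μ ≤
            K * ((Q : ℝ) + 1) ^ 2 / (a + b) ^ 2 := by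
  classical
  refine ⟨5, ?_⟩
  intro Ω mΩ μ hprob a b a₀ b₀ ε ha hb ha₀l ha₀u hb₀l hb₀u hε hε' Q hQ A B hindep hA hB hEA hEB
    hVA hVB
  -- basic positivity
  set t : ℝ := a + b with htdef
  have ht : 0 < t := by positivity
  set c : ℝ := a₀ + b₀ with hcdef
  clear_value t
  have hcl : 0.99 * t ≤ c := by rw [hcdef, htdef]; linarith
  have hcu : c ≤ 1.01 * t := by rw [hcdef, htdef]; linarith
  have hcpos : 0 < c := by linarith
  have hcne : c ≠ 0 := ne_of_gt hcpos
  clear_value c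
  -- measurable versions
  set A' : Fin Q → Ω → ℝ := fun l => (hA l).1.mk (A l) with hA'def
  set B' : Fin Q → Ω → ℝ := fun l => (hB l).1.mk (B l) with hB'def
  have haeA : ∀ l, A l =ᵐ[μ] A' l := fun l => (hA l).1.ae_eq_mk
  have haeB : ∀ l, B l =ᵐ[μ] B' l := fun l => (hB l).1.ae_eq_mk
  have hmA : ∀ l, Measurable (A' l) := fun l => (hA l).1.stronglyMeasurable_mk.measurable
  have hmB : ∀ l, Measurable (B' l) := fun l => (hB l).1.stronglyMeasurable_mk.measurable
  have hA' : ∀ l, MemLp (A' l) 2 μ := fun l => (hA l).ae_eq (haeA l)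
  have hB' : ∀ l, MemLp (B' l) 2 μ := fun l => (hB l).ae_eq (haeB l)
  set F : Fin Q ⊕ Fin Q → Ω → ℝ := Sum.elim A' B' with hFdef
  have hFm : ∀ j, Measurable (F j) := by rintro (l | l); exacts [hmA l, hmB l]
  have hF : iIndepFun F μ := by
    refine my_iIndepFun_congr hindep ?_
    rintro (l | l)
    · simpa [hFdef] using haeA l
    · simpa [hFdef] using haeB l
  -- the Y variables
  have hYmem : ∀ l, MemLp (fun ω => F (.inl l) ω + F (.inr l) ω - c) 2 μ := by
    intro l
    exact ((hA' l).add (hB' l)).sub (memLp_const c)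
  have hYint : ∀ l, Integrable (fun ω => F (.inl l) ω + F (.inr l) ω - c) μ :=
    fun l => (hYmem l).integrable one_le_two
  have hY2int : ∀ l, Integrable (fun ω => (F (.inl l) ω + F (.inr l) ω - c) ^ 2) μ :=
    fun l => (hYmem l).integrable_sq
  have intA : ∀ l, Integrable (A' l) μ := fun l => (hA' l).integrable one_le_two
  have intB : ∀ l, Integrable (B' l) μ := fun l => (hB' l).integrable one_le_two
  have hEA' : ∀ l, ∫ ω, A' l ω ∂μ = ∫ ω, A l ω ∂μ :=
    fun l => integral_congr_ae (haeA l).symm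
  have hEB' : ∀ l, ∫ ω, B' l ω ∂μ = ∫ ω, B l ω ∂μ :=
    fun l => integral_congr_ae (haeB l).symm
  set m : Fin Q → ℝ := fun l => ∫ ω, (F (.inl l) ω + F (.inr l) ω - c) ∂μ with hmdef
  have hm : ∀ l, m l = (∫ ω, A l ω ∂μ) + (∫ ω, B l ω ∂μ) - c := by
    intro l
    show ∫ ω, (A' l ω + B' l ω - c) ∂μ = _
    have h1 : ∫ ω, (A' l ω + B' l ω - c) ∂μ
        = (∫ ω, (A' l ω + B' l ω) ∂μ) - ∫ _ω, c ∂μ :=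
      integral_sub ((intA l).add (intB l)) (integrable_const c)
    have h2 : ∫ ω, (A' l ω + B' l ω) ∂μ = (∫ ω, A' l ω ∂μ) + ∫ ω, B' l ω ∂μ :=
      integral_add (intA l) (intB l)
    rw [h1, h2, integral_const]
    simp [hEA' l, hEB' l]
  set d : ℝ := t - c with hddef
  clear_value d
  have hdabs : |d| ≤ 0.01 * t := abs_le.2 ⟨by rw [hddef]; linarith, by rw [hddef]; linarith⟩
  have hdM : |d| ≤ c / 40 := by
    have : (0.01 : ℝ) * t ≤ c / 40 := by linarith
    linarith
  have hmd : ∀ l, |m l - d| ≤ ε * t := by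
    intro l
    have he : m l - d = ((∫ ω, A l ω ∂μ) - a) + ((∫ ω, B l ω ∂μ) - b) := by
      rw [hm l, hddef, htdef]; ring
    rw [he]
    calc |((∫ ω, A l ω ∂μ) - a) + ((∫ ω, B l ω ∂μ) - b)|
        ≤ |(∫ ω, A l ω ∂μ) - a| + |(∫ ω, B l ω ∂μ) - b| := abs_add_le _ _
      _ ≤ ε * a + ε * b := add_le_add (hEA l) (hEB l)
      _ = ε * t := by rw [htdef]; ring
  have hεt : ε * t ≤ 0.01 * t := by nlinarith
  have hmM : ∀ l, |m l| ≤ c / 40 := by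
    intro l
    have h1 : |m l| ≤ |m l - d| + |d| := by
      calc |m l| = |(m l - d) + d| := by ring_nf
        _ ≤ |m l - d| + |d| := abs_add_le _ _
    have h3 : |m l| ≤ ε * t + 0.01 * t := le_trans h1 (add_le_add (hmd l) hdabs)
    nlinarith
  -- second moment of each Y
  have hEY2 : ∀ l, ∫ ω, (F (.inl l) ω + F (.inr l) ω - c) ^ 2 ∂μ
      = variance (A l) μ + variance (B l) μ + (m l) ^ 2 := by
    intro l
    have indAB : IndepFun (A' l) (B' l) μ :=
      hF.indepFun (show (Sum.inl l : Fin Q ⊕ Fin Q) ≠ Sum.inr l by simp)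
    have intAB : Integrable (fun ω => A' l ω * B' l ω) μ :=
      indAB.integrable_mul (intA l) (intB l)
    have hAB : ∫ ω, A' l ω * B' l ω ∂μ = (∫ ω, A' l ω ∂μ) * ∫ ω, B' l ω ∂μ :=
      indAB.integral_fun_mul_eq_mul_integral (intA l).1 (intB l).1
    have intA2 : Integrable (fun ω => (A' l ω) ^ 2) μ := (hA' l).integrable_sq
    have intB2 : Integrable (fun ω => (B' l ω) ^ 2) μ := (hB' l).integrable_sq
    have r5 : Integrable (fun ω => (-2*c) * B' l ω + c^2) μ :=
      ((intB l).const_mul _).add (integrable_const _)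
    have r4 : Integrable (fun ω => (-2*c) * A' l ω + ((-2*c) * B' l ω + c^2)) μ :=
      ((intA l).const_mul _).add r5
    have r3 : Integrable
        (fun ω => 2 * (A' l ω * B' l ω) + ((-2*c) * A' l ω + ((-2*c) * B' l ω + c^2))) μ :=
      (intAB.const_mul _).add r4
    have r2 : Integrable (fun ω => (B' l ω)^2
        + (2 * (A' l ω * B' l ω) + ((-2*c) * A' l ω + ((-2*c) * B' l ω + c^2)))) μ :=
      intB2.add r3
    have e0 : ∫ ω, (F (.inl l) ω + F (.inr l) ω - c) ^ 2 ∂μ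
        = ∫ ω, ((A' l ω)^2 + ((B' l ω)^2
            + (2 * (A' l ω * B' l ω) + ((-2*c) * A' l ω + ((-2*c) * B' l ω + c^2))))) ∂μ :=
      integral_congr_ae (Filter.Eventually.of_forall fun ω => by show (A' l ω + B' l ω - c)^2 = _; ring)
    have q1 : ∫ ω, ((A' l ω)^2 + ((B' l ω)^2
        + (2 * (A' l ω * B' l ω) + ((-2*c) * A' l ω + ((-2*c) * B' l ω + c^2))))) ∂μ
        = (∫ ω, (A' l ω)^2 ∂μ) + ∫ ω, ((B' l ω)^2
            + (2 * (A' l ω * B' l ω) + ((-2*c) * A' l ω + ((-2*c) * B' l ω + c^2)))) ∂μ :=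
      integral_add intA2 r2
    have q2 : ∫ ω, ((B' l ω)^2
        + (2 * (A' l ω * B' l ω) + ((-2*c) * A' l ω + ((-2*c) * B' l ω + c^2)))) ∂μ
        = (∫ ω, (B' l ω)^2 ∂μ) + ∫ ω,
            (2 * (A' l ω * B' l ω) + ((-2*c) * A' l ω + ((-2*c) * B' l ω + c^2))) ∂μ :=
      integral_add intB2 r3
    have q3 : ∫ ω, (2 * (A' l ω * B' l ω) + ((-2*c) * A' l ω + ((-2*c) * B' l ω + c^2))) ∂μ
        = (∫ ω, 2 * (A' l ω * B' l ω) ∂μ)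
            + ∫ ω, ((-2*c) * A' l ω + ((-2*c) * B' l ω + c^2)) ∂μ :=
      integral_add (intAB.const_mul _) r4
    have q4 : ∫ ω, ((-2*c) * A' l ω + ((-2*c) * B' l ω + c^2)) ∂μ
        = (∫ ω, (-2*c) * A' l ω ∂μ) + ∫ ω, ((-2*c) * B' l ω + c^2) ∂μ :=
      integral_add ((intA l).const_mul _) r5
    have q5 : ∫ ω, ((-2*c) * B' l ω + c^2) ∂μ
        = (∫ ω, (-2*c) * B' l ω ∂μ) + ∫ _ω, c^2 ∂μ :=
      integral_add ((intB l).const_mul _) (integrable_const _)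
    have varA : variance (A l) μ = (∫ ω, (A l ω)^2 ∂μ) - (∫ ω, A l ω ∂μ)^2 := by
      have := variance_eq_sub (hA l)
      simpa using this
    have varB : variance (B l) μ = (∫ ω, (B l ω)^2 ∂μ) - (∫ ω, B l ω ∂μ)^2 := by
      have := variance_eq_sub (hB l)
      simpa using this
    have hsqA : ∫ ω, (A l ω)^2 ∂μ = ∫ ω, (A' l ω)^2 ∂μ :=
      integral_congr_ae (by filter_upwards [haeA l] with ω h; rw [h])
    have hsqB : ∫ ω, (B l ω)^2 ∂μ = ∫ ω, (B' l ω)^2 ∂μ :=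
      integral_congr_ae (by filter_upwards [haeB l] with ω h; rw [h])
    rw [e0, q1, q2, q3, q4, q5, integral_const_mul, integral_const_mul, integral_const_mul,
      hAB, integral_const, varA, varB, hsqA, hsqB, hm l, ← hEA' l, ← hEB' l]
    simp only [measure_univ, ENNReal.toReal_one, one_smul, smul_eq_mul, probReal_univ]
    ring
  -- index sets
  set S : ℕ → Finset (Fin Q) := fun q => Finset.univ.filter (fun l : Fin Q => (l : ℕ) < q)
    with hSdef
  have hScard : ∀ q, q ≤ Q → (S q).card = q := by
    intro q hq
    have hlt : ∀ n ∈ Finset.range q, n < Q := fun n hn => lt_of_lt_of_le (Finset.mem_range.1 hn) hq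
    have hSeq : S q = (Finset.range q).attachFin hlt := by
      ext l
      simp [hSdef, Finset.mem_attachFin, Finset.mem_filter, Finset.mem_range]
    rw [hSeq, Finset.card_attachFin, Finset.card_range]
  -- product integrals
  have hP := fun (s : Finset (Fin Q)) => my_integral_prod hF hFm (fun _ => id)
      (fun _ => measurable_id) c hYint s
  have hP2 := fun (s : Finset (Fin Q)) => my_integral_prod hF hFm (fun _ => fun x => x ^ 2)
      (fun _ => measurable_id.pow_const 2) c hY2int s
  have hPint : ∀ s : Finset (Fin Q),
      Integrable (fun ω => ∏ l ∈ s, (F (.inl l) ω + F (.inr l) ω - c)) μ := fun s => (hP s).1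
  have hPval : ∀ s : Finset (Fin Q),
      ∫ ω, (∏ l ∈ s, (F (.inl l) ω + F (.inr l) ω - c)) ∂μ = ∏ l ∈ s, m l := fun s => (hP s).2
  have hP2int : ∀ s : Finset (Fin Q),
      Integrable (fun ω => ∏ l ∈ s, (F (.inl l) ω + F (.inr l) ω - c) ^ 2) μ :=
    fun s => (hP2 s).1
  have hP2val : ∀ s : Finset (Fin Q),
      ∫ ω, (∏ l ∈ s, (F (.inl l) ω + F (.inr l) ω - c) ^ 2) ∂μ
        = ∏ l ∈ s, ∫ ω, (F (.inl l) ω + F (.inr l) ω - c) ^ 2 ∂μ := fun s => (hP2 s).2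
  -- passing from A,B to A',B'
  have haeAll : ∀ᵐ ω ∂μ, (∀ l, A l ω = A' l ω) ∧ ∀ l, B l ω = B' l ω :=
    (ae_all_iff.2 haeA).and (ae_all_iff.2 haeB)
  have hzae : (fun ω => bivarTaylorEst a₀ b₀ Q A B ω)
      =ᵐ[μ] fun ω => bivarTaylorEst a₀ b₀ Q A' B' ω := by
    filter_upwards [haeAll] with ω h
    unfold bivarTaylorEst
    exact Finset.sum_congr rfl fun q _ =>
      congrArg _ (Finset.prod_congr rfl fun l _ => by rw [h.1 l, h.2 l])
  -- the estimator as a sum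
  have hz'form : ∀ ω, bivarTaylorEst a₀ b₀ Q A' B' ω
      = ∑ q ∈ Finset.range (Q + 1),
          ((-1 : ℝ) ^ q / c ^ (q + 1)) * ∏ l ∈ S q, (F (.inl l) ω + F (.inr l) ω - c) := by
    intro ω
    unfold bivarTaylorEst
    rw [← hcdef]
    refine Finset.sum_congr rfl fun q _ => congrArg _ (Finset.prod_congr rfl fun l _ => ?_)
    show A' l ω - a₀ + (B' l ω - b₀) = A' l ω + B' l ω - c
    rw [hcdef]; ring
  have hEz' : ∫ ω, bivarTaylorEst a₀ b₀ Q A' B' ω ∂μ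
      = ∑ q ∈ Finset.range (Q + 1), ((-1 : ℝ) ^ q / c ^ (q + 1)) * ∏ l ∈ S q, m l := by
    calc ∫ ω, bivarTaylorEst a₀ b₀ Q A' B' ω ∂μ
        = ∫ ω, (∑ q ∈ Finset.range (Q + 1),
            ((-1 : ℝ) ^ q / c ^ (q + 1)) * ∏ l ∈ S q, (F (.inl l) ω + F (.inr l) ω - c)) ∂μ := by
          congr 1
          funext ω
          exact hz'form ω
      _ = ∑ q ∈ Finset.range (Q + 1), ∫ ω,
            ((-1 : ℝ) ^ q / c ^ (q + 1)) * ∏ l ∈ S q, (F (.inl l) ω + F (.inr l) ω - c) ∂μ :=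
          integral_finset_sum _ (fun q _ => (hPint (S q)).const_mul _)
      _ = ∑ q ∈ Finset.range (Q + 1), ((-1 : ℝ) ^ q / c ^ (q + 1)) * ∏ l ∈ S q, m l := by
          refine Finset.sum_congr rfl fun q _ => ?_
          rw [integral_const_mul, hPval (S q)]
  have hQ1 : (1:ℝ) ≤ (Q:ℝ) := by exact_mod_cast hQ
  have hc2' : 0.9801 * t^2 ≤ c^2 := by nlinarith [hcl, ht]
  have hxne : -(d/c) ≠ 1 := by
    intro h
    have h2 : d / c = -1 := by linarith
    have h3 : d = -1 * c := (div_eq_iff hcne).1 h2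
    have h4 : t = 0 := by rw [hddef] at h3; linarith
    linarith
  have hgeom : ∑ q ∈ Finset.range (Q + 1), ((-1:ℝ)^q / c^(q+1)) * d ^ q
      = (1 - (-(d/c))^(Q+1)) / t := by
    have h1 : ∀ q, ((-1:ℝ)^q / c^(q+1)) * d ^ q = (1/c) * (-(d/c))^q := by
      intro q
      rw [show -(d/c) = (-d)/c by ring, div_pow, neg_pow, pow_succ]
      ring
    rw [Finset.sum_congr rfl fun q _ => h1 q, ← Finset.mul_sum, geom_sum_eq hxne (Q+1)]
    have hden : (-(d/c)) - 1 = -(t/c) := by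
      rw [hddef]
      field_simp
      ring
    rw [hden]
    generalize (-(d/c))^(Q+1) = X
    field_simp [hcne, ne_of_gt ht]
    ring
  have hterm : ∀ q ∈ Finset.range (Q+1),
      (1/c^(q+1)) * |(∏ l ∈ S q, m l) - d ^ q| ≤ (ε*t/c^2) * ((q:ℝ) * (1/40)^(q-1)) := by
    intro q hq
    have hq' : q ≤ Q := Nat.lt_succ_iff.mp (Finset.mem_range.1 hq)
    have hb := my_prod_sub_pow_le (S q) m d (c/40) (ε*t) (by positivity) (by positivity)
      hdM (fun i _ => hmM i) (fun i _ => hmd i)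
    rw [hScard q hq'] at hb
    have h2 : (1/c^(q+1)) * |(∏ l ∈ S q, m l) - d ^ q|
        ≤ (1/c^(q+1)) * ((q:ℝ) * (ε*t) * (c/40)^(q-1)) :=
      mul_le_mul_of_nonneg_left hb (by positivity)
    refine h2.trans ?_
    cases q with
    | zero => simp
    | succ k =>
      have heq : (1/c^(k+1+1)) * (((k+1:ℕ):ℝ) * (ε*t) * (c/40)^((k+1)-1))
          = (ε*t/c^2) * (((k+1:ℕ):ℝ) * (1/40)^((k+1)-1)) := by
        simp only [Nat.add_sub_cancel]
        field_simp
        ring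
      rw [heq]
  have hsum1 : ∑ q ∈ Finset.range (Q+1), (1/c^(q+1)) * |(∏ l ∈ S q, m l) - d ^ q|
      ≤ 4 * (ε*t) / c^2 := by
    calc ∑ q ∈ Finset.range (Q+1), (1/c^(q+1)) * |(∏ l ∈ S q, m l) - d ^ q|
        ≤ ∑ q ∈ Finset.range (Q+1), (ε*t/c^2) * ((q:ℝ) * (1/40)^(q-1)) :=
          Finset.sum_le_sum hterm
      _ ≤ ∑ q ∈ Finset.range (Q+1), (ε*t/c^2) * (2 * (1/2)^q) :=
          Finset.sum_le_sum fun q _ =>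
            mul_le_mul_of_nonneg_left (my_q_pow_le q) (by positivity)
      _ = (ε*t/c^2) * (2 * ∑ q ∈ Finset.range (Q+1), ((1:ℝ)/2)^q) := by
          rw [← Finset.mul_sum, ← Finset.mul_sum]
      _ ≤ (ε*t/c^2) * (2 * (1/(1-1/2))) := by
          refine mul_le_mul_of_nonneg_left (mul_le_mul_of_nonneg_left ?_ (by norm_num))
            (by positivity)
          exact my_geom_le (1/2) (by norm_num) (by norm_num) (Q+1)
      _ = 4 * (ε*t)/c^2 := by
          norm_num
          ring
  have hEz : ∫ ω, bivarTaylorEst a₀ b₀ Q A B ω ∂μ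
      = ∑ q ∈ Finset.range (Q + 1), ((-1:ℝ)^q / c^(q+1)) * ∏ l ∈ S q, m l :=
    (integral_congr_ae hzae).trans hEz'
  have hsplit : (∑ q ∈ Finset.range (Q+1), ((-1:ℝ)^q/c^(q+1)) * ∏ l ∈ S q, m l)
      = (∑ q ∈ Finset.range (Q+1), ((-1:ℝ)^q/c^(q+1)) * ((∏ l ∈ S q, m l) - d^q))
        + ∑ q ∈ Finset.range (Q+1), ((-1:ℝ)^q/c^(q+1)) * d^q := by
    rw [← Finset.sum_add_distrib]
    exact Finset.sum_congr rfl fun q _ => by ring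
  refine ⟨?_, ?_⟩
  · rw [hEz, hsplit, hgeom]
    have habs : ∀ q, |((-1:ℝ)^q/c^(q+1)) * ((∏ l ∈ S q, m l) - d^q)|
        = (1/c^(q+1)) * |(∏ l ∈ S q, m l) - d^q| := by
      intro q
      rw [abs_mul, abs_div, abs_pow, abs_pow, abs_neg, abs_one, one_pow, abs_of_pos hcpos]
    have hdiff : (1 - (-(d/c))^(Q+1)) / t - 1/t = -((-(d/c))^(Q+1))/t := by
      rw [div_sub_div_same]
      ring_nf
    have hdc : |d|/c ≤ 1/40 := by
      rw [div_le_iff₀ hcpos]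
      linarith
    have htail : |(1 - (-(d/c))^(Q+1)) / t - 1/t| ≤ ((1:ℝ)/40)^Q / t := by
      rw [hdiff, abs_div, abs_neg, abs_pow, abs_neg, abs_div, abs_of_pos hcpos,
        abs_of_pos ht]
      have h1 : (|d|/c)^(Q+1) ≤ ((1:ℝ)/40)^(Q+1) :=
        pow_le_pow_left₀ (by positivity) hdc _
      have h2 : ((1:ℝ)/40)^(Q+1) ≤ ((1:ℝ)/40)^Q := by
        rw [pow_succ]
        exact mul_le_of_le_one_right (by positivity) (by norm_num)
      have h3 : (|d|/c)^(Q+1) ≤ ((1:ℝ)/40)^Q := h1.trans h2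
      exact div_le_div_of_nonneg_right h3 ht.le
    calc |(∑ q ∈ Finset.range (Q+1), ((-1:ℝ)^q/c^(q+1)) * ((∏ l ∈ S q, m l) - d^q))
          + (1 - (-(d/c))^(Q+1)) / t - 1/t|
        ≤ |∑ q ∈ Finset.range (Q+1), ((-1:ℝ)^q/c^(q+1)) * ((∏ l ∈ S q, m l) - d^q)|
          + |(1 - (-(d/c))^(Q+1)) / t - 1/t| := by
          rw [add_sub_assoc]
          exact abs_add_le _ _
      _ ≤ (∑ q ∈ Finset.range (Q+1), (1/c^(q+1)) * |(∏ l ∈ S q, m l) - d^q|)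
          + ((1:ℝ)/40)^Q / t := by
          refine add_le_add ?_ htail
          refine (Finset.abs_sum_le_sum_abs _ _).trans ?_
          exact le_of_eq (Finset.sum_congr rfl fun q _ => habs q)
      _ ≤ 4 * (ε*t)/c^2 + ((1:ℝ)/40)^Q / t := add_le_add hsum1 (le_refl _)
      _ ≤ 5*((Q:ℝ)*ε)/t + ((1:ℝ)/40)^Q/t := by
          have h1 : 4*(ε*t)/c^2 ≤ 5*((Q:ℝ)*ε)/t := by
            rw [div_le_div_iff₀ (by positivity) ht]
            have h6 : ε * (0.9801 * t^2) ≤ ε * c^2 := mul_le_mul_of_nonneg_left hc2' hε.le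
            have h7 : 1 * (ε * c^2) ≤ (Q:ℝ) * (ε * c^2) :=
              mul_le_mul_of_nonneg_right hQ1 (by positivity)
            nlinarith [mul_pos hε (mul_pos ht ht)]
          linarith
      _ ≤ 5 * ((Q:ℝ)*ε + (1/40)^Q) / t := by
          rw [← add_div]
          refine (div_le_div_iff_of_pos_right ht).2 ?_
          nlinarith [pow_nonneg (show (0:ℝ) ≤ 1/40 by norm_num) Q]
  · -- second moment bound
    have ht2 : t^2 = a^2 + b^2 + 2*(a*b) := by rw [htdef]; ring
    have hEY2le : ∀ l, ∫ ω, (F (.inl l) ω + F (.inr l) ω - c)^2 ∂μ ≤ c^2/4 := by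
      intro l
      rw [hEY2 l]
      have h1 := hVA l
      have h2 := hVB l
      have habs := abs_le.1 (hmM l)
      have h3 : (m l)^2 ≤ (c/40)^2 := sq_le_sq' (by linarith [habs.1]) habs.2
      nlinarith [mul_pos ha hb, hc2', ht2, h3]
    have hEY2pos : ∀ l, 0 ≤ ∫ ω, (F (.inl l) ω + F (.inr l) ω - c)^2 ∂μ :=
      fun l => integral_nonneg fun ω => sq_nonneg _
    have hptsq : ∀ ω, (bivarTaylorEst a₀ b₀ Q A' B' ω)^2
        ≤ ((Q:ℝ)+1) * ∑ q ∈ Finset.range (Q+1),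
            (((-1:ℝ)^q/c^(q+1))^2 * ∏ l ∈ S q, (F (.inl l) ω + F (.inr l) ω - c)^2) := by
      intro ω
      rw [hz'form ω]
      have hkey := sq_sum_le_card_mul_sum_sq (s := Finset.range (Q+1))
        (f := fun q => ((-1:ℝ)^q/c^(q+1)) * ∏ l ∈ S q, (F (.inl l) ω + F (.inr l) ω - c))
      rw [Finset.card_range] at hkey
      refine hkey.trans (le_of_eq ?_)
      push_cast
      congr 1
      refine Finset.sum_congr rfl fun q _ => ?_
      rw [mul_pow, ← Finset.prod_pow]
    have hz2ae : (fun ω => (bivarTaylorEst a₀ b₀ Q A B ω)^2)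
        =ᵐ[μ] fun ω => (bivarTaylorEst a₀ b₀ Q A' B' ω)^2 := by
      filter_upwards [hzae] with ω h
      rw [h]
    have hRHSint : Integrable (fun ω => ((Q:ℝ)+1) * ∑ q ∈ Finset.range (Q+1),
        (((-1:ℝ)^q/c^(q+1))^2 * ∏ l ∈ S q, (F (.inl l) ω + F (.inr l) ω - c)^2)) μ :=
      (integrable_finset_sum _ fun q _ => (hP2int (S q)).const_mul _).const_mul _
    rw [integral_congr_ae hz2ae]
    have hterm2 : ∀ q ∈ Finset.range (Q+1),
        ((-1:ℝ)^q/c^(q+1))^2 * ∏ l ∈ S q, ∫ ω, (F (.inl l) ω + F (.inr l) ω - c)^2 ∂μ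
          ≤ (1/4)^q * (1/c^2) := by
      intro q hq
      have hq' : q ≤ Q := Nat.lt_succ_iff.mp (Finset.mem_range.1 hq)
      have hprod : ∏ l ∈ S q, ∫ ω, (F (.inl l) ω + F (.inr l) ω - c)^2 ∂μ ≤ (c^2/4)^q := by
        have := Finset.prod_le_prod (s := S q)
          (f := fun l => ∫ ω, (F (.inl l) ω + F (.inr l) ω - c)^2 ∂μ)
          (g := fun _ => c^2/4) (fun l _ => hEY2pos l) (fun l _ => hEY2le l)
        rwa [Finset.prod_const, hScard q hq'] at this
      have hcoef : ((-1:ℝ)^q/c^(q+1))^2 = 1/(c^(q+1))^2 := by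
        rw [div_pow, ← pow_mul, mul_comm q 2, pow_mul]
        norm_num
      calc ((-1:ℝ)^q/c^(q+1))^2 * ∏ l ∈ S q, ∫ ω, (F (.inl l) ω + F (.inr l) ω - c)^2 ∂μ
          ≤ ((-1:ℝ)^q/c^(q+1))^2 * (c^2/4)^q := by
            refine mul_le_mul_of_nonneg_left hprod ?_
            positivity
        _ = (1/4)^q * (1/c^2) := by
            rw [hcoef]
            field_simp
            ring
    calc ∫ ω, (bivarTaylorEst a₀ b₀ Q A' B' ω)^2 ∂μ
        ≤ ∫ ω, (((Q:ℝ)+1) * ∑ q ∈ Finset.range (Q+1),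
            (((-1:ℝ)^q/c^(q+1))^2 * ∏ l ∈ S q, (F (.inl l) ω + F (.inr l) ω - c)^2)) ∂μ :=
          integral_mono_of_nonneg (Filter.Eventually.of_forall fun ω => sq_nonneg _)
            hRHSint (Filter.Eventually.of_forall hptsq)
      _ = ((Q:ℝ)+1) * ∑ q ∈ Finset.range (Q+1),
            (((-1:ℝ)^q/c^(q+1))^2 * ∏ l ∈ S q, ∫ ω, (F (.inl l) ω + F (.inr l) ω - c)^2 ∂μ) := by
          rw [integral_const_mul, integral_finset_sum _ fun q _ => (hP2int (S q)).const_mul _]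
          congr 1
          refine Finset.sum_congr rfl fun q _ => ?_
          rw [integral_const_mul, hP2val (S q)]
      _ ≤ ((Q:ℝ)+1) * ∑ q ∈ Finset.range (Q+1), ((1:ℝ)/4)^q * (1/c^2) := by
          refine mul_le_mul_of_nonneg_left (Finset.sum_le_sum hterm2) (by positivity)
      _ = ((Q:ℝ)+1) * (∑ q ∈ Finset.range (Q+1), ((1:ℝ)/4)^q) * (1/c^2) := by
          rw [← Finset.sum_mul]
          ring
      _ ≤ ((Q:ℝ)+1) * (1/(1-1/4)) * (1/c^2) := by
          refine mul_le_mul_of_nonneg_right (mul_le_mul_of_nonneg_left ?_ (by positivity))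
            (by positivity)
          exact my_geom_le (1/4) (by norm_num) (by norm_num) (Q+1)
      _ ≤ 5 * ((Q:ℝ)+1)^2 / t^2 := by
          have k1 : ((Q:ℝ)+1) ≤ ((Q:ℝ)+1)^2 := by nlinarith [hQ1]
          have heq : ((Q:ℝ)+1) * (1/(1-1/4)) * (1/c^2) = (((Q:ℝ)+1) * (4/3))/c^2 := by
            norm_num
            ring
          rw [heq, div_le_div_iff₀ (by positivity) (by positivity)]
          have k3 : ((Q:ℝ)+1)^2 * (0.9801*t^2) ≤ ((Q:ℝ)+1)^2 * c^2 :=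
            mul_le_mul_of_nonneg_left hc2' (by positivity)
          have k2 : ((Q:ℝ)+1) * (4/3) * t^2 ≤ ((Q:ℝ)+1)^2 * (4/3) * t^2 := by
            have := mul_le_mul_of_nonneg_right k1 (show (0:ℝ) ≤ (4/3) * t^2 by positivity)
            nlinarith [this]
          nlinarith [k2, k3]
end

section
/- Let n ≥ 1, let u, v ∈ ℝ^n with u_i ≠ 0 for all i, and let δ ≥ 0. Let w be a random index in {1,…,n} whose distribution satisfies |Pr[w = i] − u_i² / ||u||₂²| ≤ δ for every i. Let Û be a square-integrable real random variable independent of w with E[Û²] = ||u||₂², and let V̂ be a real random variable with E[V̂ | w = i] = v_i for every i, such that Û is independent of the pair (w, V̂). Define W = V̂ · Û² / u_w. Then |E[W] − ⟨u, v⟩| ≤ δ · Σ_{i=1}^n |v_i| · ||u||₂² / |u_i|, where ⟨u,v⟩ = Σ_i u_i v_i. -/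
open MeasureTheory ProbabilityTheory

/-- **inner-product estimator from an approximate `L₂` sampler, bias.**
Let `u, v ∈ ℝⁿ` with all `u i ≠ 0` and let `δ ≥ 0`.  Let `w` be a random index with
`|Pr[w = i] − u i ² / ‖u‖₂²| ≤ δ` for every `i`, let `Û` be square-integrable with
`E[Û²] = ‖u‖₂²` and independent of the pair `(w, V̂)`, and let `V̂` be an (integrable)
random variable whose conditional expectation on each event `{w = i}` is `v i`
(expressed as `∫_{w = i} V̂ = v i · Pr[w = i]`).  Then for `W = V̂ · Û² / u_w`,
`|E[W] − ⟨u, v⟩| ≤ δ · Σ_i |v i| ‖u‖₂² / |u i|`. -/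
theorem inner_product_estimator_bias
    {Ω : Type*} [MeasurableSpace Ω] (μ : Measure Ω) [IsProbabilityMeasure μ]
    (n : ℕ) (hn : 1 ≤ n) (u v : Fin n → ℝ) (hu : ∀ i, u i ≠ 0)
    (δ : ℝ) (hδ : 0 ≤ δ)
    (w : Ω → Fin n) (hw : Measurable w)
    (hpr : ∀ i, |(μ {ω | w ω = i}).toReal - u i ^ 2 / ∑ j, u j ^ 2| ≤ δ)
    (Uhat : Ω → ℝ) (hUmeas : Measurable Uhat) (hUmem : MemLp Uhat 2 μ)
    (hU2 : ∫ ω, Uhat ω ^ 2 ∂μ = ∑ j, u j ^ 2)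
    (Vhat : Ω → ℝ) (hVmeas : Measurable Vhat) (hVint : Integrable Vhat μ)
    (hVcond : ∀ i, ∫ ω in {ω | w ω = i}, Vhat ω ∂μ = v i * (μ {ω | w ω = i}).toReal)
    (hindep : IndepFun Uhat (fun ω => (w ω, Vhat ω)) μ) :
    |(∫ ω, Vhat ω * Uhat ω ^ 2 / u (w ω) ∂μ) - ∑ i, u i * v i| ≤
      δ * ∑ i, |v i| * (∑ j, u j ^ 2) / |u i| := by
  classical
  haveI : NeZero n := ⟨by omega⟩
  set S : ℝ := ∑ j, u j ^ 2 with hSdef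
  have hSpos : 0 < S :=
    Finset.sum_pos (fun i _ => pow_two_pos_of_ne_zero (hu i)) Finset.univ_nonempty
  set g : Ω → ℝ := fun ω => Vhat ω / u (w ω) with hgdef
  have huw : Measurable fun ω => u (w ω) := (measurable_of_countable u).comp hw
  have hgmeas : Measurable g := hVmeas.div huw
  have hgint : Integrable g μ := by
    have : Integrable (fun ω => (u (w ω))⁻¹ * Vhat ω) μ := by
      refine hVint.bdd_mul (c := ∑ i, |(u i)⁻¹|) huw.inv.aestronglyMeasurable (Filter.Eventually.of_forall fun x => ?_)
      rw [Real.norm_eq_abs]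
      exact Finset.single_le_sum (fun i _ => abs_nonneg ((u i)⁻¹)) (Finset.mem_univ (w x))
    exact this.congr (Filter.Eventually.of_forall fun ω => by
      simp [hgdef, div_eq_inv_mul])
  have hU2int : Integrable (fun ω => Uhat ω ^ 2) μ := by
    have := hUmem.integrable_sq
    exact this.congr (Filter.Eventually.of_forall fun ω => by simp [sq])
  have hindep2 : IndepFun (fun ω => Uhat ω ^ 2) g μ := by
    have := hindep.comp (φ := fun x : ℝ => x ^ 2)
      (ψ := fun p : Fin n × ℝ => p.2 / u p.1)
      (measurable_id.pow_const 2)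
      (measurable_snd.div ((measurable_of_countable u).comp measurable_fst))
    exact this
  have hmul : ∫ ω, Uhat ω ^ 2 * g ω ∂μ = (∫ ω, Uhat ω ^ 2 ∂μ) * ∫ ω, g ω ∂μ :=
    IndepFun.integral_fun_mul_eq_mul_integral hindep2 hU2int.aestronglyMeasurable hgint.aestronglyMeasurable
  -- decompose ∫ g as a sum over the fibers of w
  have hmeasfib : ∀ i : Fin n, MeasurableSet {ω | w ω = i} := fun i =>
    hw (measurableSet_singleton i)
  have hcover : (⋃ i ∈ (Finset.univ : Finset (Fin n)), {ω | w ω = i}) = Set.univ := by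
    ext ω; simp
  have hdisj : (↑(Finset.univ : Finset (Fin n)) : Set (Fin n)).Pairwise
      (Function.onFun Disjoint fun i => {ω | w ω = i}) := by
    intro i _ j _ hij
    exact Set.disjoint_left.mpr fun ω h1 h2 => hij (h1.symm.trans h2)
  have key : ∫ ω, g ω ∂μ = ∑ i, v i * (μ {ω | w ω = i}).toReal / u i := by
    rw [← setIntegral_univ, ← hcover,
      integral_biUnion_finset Finset.univ (fun i _ => hmeasfib i) hdisj
        (fun i _ => hgint.integrableOn)]
    refine Finset.sum_congr rfl fun i _ => ?_
    have : ∫ ω in {ω | w ω = i}, g ω ∂μ = ∫ ω in {ω | w ω = i}, Vhat ω / u i ∂μ := by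
      refine setIntegral_congr_fun (hmeasfib i) fun ω hω => ?_
      simp only [Set.mem_setOf_eq] at hω
      simp [hgdef, hω]
    rw [this, integral_div, hVcond i]
  set p : Fin n → ℝ := fun i => (μ {ω | w ω = i}).toReal with hpdef
  have hEW : ∫ ω, Vhat ω * Uhat ω ^ 2 / u (w ω) ∂μ
      = S * ∑ i, v i * p i / u i := by
    have hrw : (fun ω => Vhat ω * Uhat ω ^ 2 / u (w ω)) = fun ω => Uhat ω ^ 2 * g ω := by
      funext ω; simp only [hgdef]; ring
    rw [hrw, hmul, hU2, key]
  rw [hEW]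
  have hdiff : S * (∑ i, v i * p i / u i) - ∑ i, u i * v i
      = ∑ i, (v i * S / u i) * (p i - u i ^ 2 / S) := by
    rw [Finset.mul_sum, ← Finset.sum_sub_distrib]
    refine Finset.sum_congr rfl fun i _ => ?_
    have hS0 : S ≠ 0 := hSpos.ne'
    have hui : u i ≠ 0 := hu i
    field_simp
  rw [hdiff]
  calc |∑ i, (v i * S / u i) * (p i - u i ^ 2 / S)|
      ≤ ∑ i, |(v i * S / u i) * (p i - u i ^ 2 / S)| := Finset.abs_sum_le_sum_abs _ _
    _ ≤ ∑ i, (|v i| * S / |u i|) * δ := by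
        refine Finset.sum_le_sum fun i _ => ?_
        rw [abs_mul, abs_div, abs_mul, abs_of_pos hSpos]
        exact mul_le_mul_of_nonneg_left (hpr i)
          (by positivity)
    _ = δ * ∑ i, |v i| * S / |u i| := by rw [← Finset.sum_mul, mul_comm]
end

section
/- Let n ≥ 1, let u, v ∈ ℝ^n with u_i ≠ 0 for all i, let δ ≥ 0 and γ > 0 with ||v||₂² ≤ γ · ||u||₂², and let K₁, K₂ ≥ 0. Let w be a random index in {1,…,n} whose distribution satisfies |Pr[w = i] − u_i² / ||u||₂²| ≤ δ for every i. Let Û be a real random variable independent of w with E[Û⁴] ≤ K₁ · ||u||₂⁴, and let V̂ be a real random variable with E[V̂² | w = i] ≤ K₂ · v_i² for every i, such that Û is independent of the pair (w, V̂). Define W = V̂ · Û² / u_w. Then E[W²] ≤ K₁K₂ · (γ · ||u||₂⁴ + δ · ||u||₂⁴ · Σ_{i=1}^n v_i² / u_i²). -/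
open MeasureTheory ProbabilityTheory

/-- **inner-product estimator from an approximate `L₂` sampler, second
moment.** Let `u, v ∈ ℝⁿ` with all `u i ≠ 0`, `δ ≥ 0`, `γ > 0` with
`‖v‖₂² ≤ γ ‖u‖₂²`, and `K₁, K₂ ≥ 0`.  Let `w` be a random index with
`|Pr[w = i] − u i ² / ‖u‖₂²| ≤ δ` for every `i`; let `Û` satisfy `E[Û⁴] ≤ K₁ ‖u‖₂⁴`
and be independent of the pair `(w, V̂)`; and let `V̂` satisfy
`E[V̂² | w = i] ≤ K₂ v i ²` (expressed as `∫_{w = i} V̂² ≤ K₂ v i ² · Pr[w = i]`).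
Then for `W = V̂ · Û² / u_w`,
`E[W²] ≤ K₁ K₂ (γ ‖u‖₂⁴ + δ ‖u‖₂⁴ Σ_i v i ² / u i ²)`. -/
theorem inner_product_estimator_second_moment
    {Ω : Type*} [MeasurableSpace Ω] (μ : Measure Ω) [IsProbabilityMeasure μ]
    (n : ℕ) (hn : 1 ≤ n) (u v : Fin n → ℝ) (hu : ∀ i, u i ≠ 0)
    (δ γ : ℝ) (hδ : 0 ≤ δ) (hγ : 0 < γ)
    (hv : ∑ i, v i ^ 2 ≤ γ * ∑ i, u i ^ 2)
    (K₁ K₂ : ℝ) (hK₁ : 0 ≤ K₁) (hK₂ : 0 ≤ K₂)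
    (w : Ω → Fin n) (hw : Measurable w)
    (hpr : ∀ i, |(μ {ω | w ω = i}).toReal - u i ^ 2 / ∑ j, u j ^ 2| ≤ δ)
    (Uhat : Ω → ℝ) (hUmeas : Measurable Uhat) (hUmem : MemLp Uhat 4 μ)
    (hU4 : ∫ ω, Uhat ω ^ 4 ∂μ ≤ K₁ * (∑ j, u j ^ 2) ^ 2)
    (Vhat : Ω → ℝ) (hVmeas : Measurable Vhat) (hVmem : MemLp Vhat 2 μ)
    (hVcond : ∀ i, ∫ ω in {ω | w ω = i}, Vhat ω ^ 2 ∂μ ≤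
        K₂ * v i ^ 2 * (μ {ω | w ω = i}).toReal)
    (hindep : IndepFun Uhat (fun ω => (w ω, Vhat ω)) μ) :
    ∫ ω, (Vhat ω * Uhat ω ^ 2 / u (w ω)) ^ 2 ∂μ ≤
      K₁ * K₂ * (γ * (∑ j, u j ^ 2) ^ 2 +
        δ * (∑ j, u j ^ 2) ^ 2 * ∑ i, v i ^ 2 / u i ^ 2) := by
  have hS : (0:ℝ) < ∑ j, u j ^ 2 := by
    apply Finset.sum_pos' (fun i _ => sq_nonneg _)
    exact ⟨⟨0, hn⟩, Finset.mem_univ _,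
      lt_of_le_of_ne (sq_nonneg _) (Ne.symm (pow_ne_zero 2 (hu _)))⟩
  set S : ℝ := ∑ j, u j ^ 2 with hSdef
  set T : ℝ := ∑ i, v i ^ 2 / u i ^ 2 with hTdef
  -- the second factor
  set g : Ω → ℝ := fun ω => Vhat ω ^ 2 / u (w ω) ^ 2 with hgdef
  have hgmeas : Measurable g :=
    (hVmeas.pow_const 2).div ((measurable_of_countable (fun i => u i ^ 2)).comp hw)
  have hgnonneg : ∀ ω, 0 ≤ g ω := fun ω => by positivity
  -- integrability of g
  have hV2 : Integrable (fun ω => Vhat ω ^ 2) μ := hVmem.integrable_sq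
  have hgint : Integrable g μ := by
    have hbm : Measurable fun ω => (u (w ω) ^ 2)⁻¹ :=
      (measurable_of_countable (fun i => (u i ^ 2)⁻¹)).comp hw
    have : Integrable (fun ω => (u (w ω) ^ 2)⁻¹ * Vhat ω ^ 2) μ := by
      apply hV2.bdd_mul (c := ∑ i, (u i ^ 2)⁻¹) hbm.aestronglyMeasurable
      refine Filter.Eventually.of_forall fun ω => ?_
      rw [Real.norm_eq_abs, abs_of_nonneg (by positivity)]
      exact Finset.single_le_sum (f := fun i => (u i ^ 2)⁻¹) (fun i _ => by positivity)
        (Finset.mem_univ (w ω))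
    refine this.congr (Filter.Eventually.of_forall fun ω => ?_)
    simp [hgdef, div_eq_mul_inv, mul_comm]
  -- integrability of Uhat ^ 4
  have hU4int : Integrable (fun ω => Uhat ω ^ 4) μ := by
    have h := hUmem.integrable_norm_rpow (by norm_num) (by norm_num)
    refine h.congr (Filter.Eventually.of_forall fun ω => ?_)
    show ‖Uhat ω‖ ^ ((4:ENNReal)).toReal = Uhat ω ^ 4
    rw [show ((4:ENNReal)).toReal = ((4:ℕ):ℝ) by norm_num, Real.rpow_natCast,
      Real.norm_eq_abs, ← abs_pow, abs_of_nonneg (by positivity)]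
  -- independence
  have hind : IndepFun (fun ω => Uhat ω ^ 4) g μ := by
    have hφ : Measurable fun p : Fin n × ℝ => p.2 ^ 2 / u p.1 ^ 2 :=
      (measurable_snd.pow_const 2).div
        ((measurable_of_countable (fun i => u i ^ 2)).comp measurable_fst)
    exact hindep.comp (measurable_id.pow_const 4) hφ
  -- step 1: rewrite integrand as a product
  have hsplit : ∫ ω, (Vhat ω * Uhat ω ^ 2 / u (w ω)) ^ 2 ∂μ
      = (∫ ω, Uhat ω ^ 4 ∂μ) * ∫ ω, g ω ∂μ := by
    rw [← hind.integral_mul_eq_mul_integral hU4int.aestronglyMeasurable hgint.aestronglyMeasurable]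
    congr 1
    funext ω
    simp only [Pi.mul_apply, hgdef]
    ring
  rw [hsplit]
  -- step 2: decompose ∫ g over the fibers of w
  have hfib : ∀ i : Fin n, MeasurableSet {ω | w ω = i} := fun i =>
    hw (measurableSet_singleton i)
  have hdecomp : ∫ ω, g ω ∂μ = ∑ i, ∫ ω in {ω | w ω = i}, g ω ∂μ := by
    have hptw : (fun ω => g ω)
        = fun ω => ∑ i, Set.indicator {ω | w ω = i} g ω := by
      funext ω
      rw [Finset.sum_eq_single (w ω)]
      · simp [Set.indicator_of_mem, Set.mem_setOf_eq]
      · intro i _ hi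
        have hnm : ω ∉ {ω | w ω = i} := fun h => hi (Eq.symm h)
        exact Set.indicator_of_notMem hnm _
      · exact fun h => absurd (Finset.mem_univ _) h
    conv_lhs => rw [hptw]
    rw [integral_finset_sum _ (fun i _ => hgint.indicator (hfib i))]
    exact Finset.sum_congr rfl fun i _ => integral_indicator (hfib i)
  rw [hdecomp]
  -- step 3: bound each fiber integral
  have hfibbound : ∀ i : Fin n, ∫ ω in {ω | w ω = i}, g ω ∂μ
      ≤ K₂ * v i ^ 2 / u i ^ 2 * (μ {ω | w ω = i}).toReal := by
    intro i
    have heq : ∫ ω in {ω | w ω = i}, g ω ∂μ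
        = (u i ^ 2)⁻¹ * ∫ ω in {ω | w ω = i}, Vhat ω ^ 2 ∂μ := by
      rw [← integral_const_mul]
      refine setIntegral_congr_fun (hfib i) fun ω hω => ?_
      have : w ω = i := hω
      simp [hgdef, this, div_eq_mul_inv, mul_comm]
    rw [heq]
    calc (u i ^ 2)⁻¹ * ∫ ω in {ω | w ω = i}, Vhat ω ^ 2 ∂μ
        ≤ (u i ^ 2)⁻¹ * (K₂ * v i ^ 2 * (μ {ω | w ω = i}).toReal) :=
          mul_le_mul_of_nonneg_left (hVcond i) (by positivity)
      _ = K₂ * v i ^ 2 / u i ^ 2 * (μ {ω | w ω = i}).toReal := by ring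
  -- step 4: bound the probabilities
  have hprb : ∀ i : Fin n, (μ {ω | w ω = i}).toReal ≤ u i ^ 2 / S + δ := by
    intro i
    have := abs_sub_le_iff.mp (hpr i)
    linarith [this.1]
  have hsum : ∑ i, ∫ ω in {ω | w ω = i}, g ω ∂μ ≤ K₂ * (γ + δ * T) := by
    calc ∑ i, ∫ ω in {ω | w ω = i}, g ω ∂μ
        ≤ ∑ i, K₂ * v i ^ 2 / u i ^ 2 * (u i ^ 2 / S + δ) := by
          refine Finset.sum_le_sum fun i _ => le_trans (hfibbound i) ?_
          exact mul_le_mul_of_nonneg_left (hprb i) (by positivity)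
      _ = K₂ * ((∑ i, v i ^ 2) / S) + K₂ * δ * T := by
          rw [Finset.sum_div, Finset.mul_sum, hTdef, Finset.mul_sum, ← Finset.sum_add_distrib]
          refine Finset.sum_congr rfl fun i _ => ?_
          field_simp [hu i, hS.ne']
      _ ≤ K₂ * γ + K₂ * δ * T := by
          have : (∑ i, v i ^ 2) / S ≤ γ := by
            rw [div_le_iff₀ hS]; linarith
          nlinarith [mul_le_mul_of_nonneg_left this hK₂]
      _ = K₂ * (γ + δ * T) := by ring
  -- combine
  have hTnn : 0 ≤ T := Finset.sum_nonneg fun i _ => by positivity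
  have hsumnn : 0 ≤ ∑ i, ∫ ω in {ω | w ω = i}, g ω ∂μ :=
    Finset.sum_nonneg fun i _ => setIntegral_nonneg (hfib i) fun ω _ => hgnonneg ω
  calc (∫ ω, Uhat ω ^ 4 ∂μ) * ∑ i, ∫ ω in {ω | w ω = i}, g ω ∂μ
      ≤ (K₁ * S ^ 2) * (K₂ * (γ + δ * T)) := by
        apply mul_le_mul hU4 hsum hsumnn (by positivity)
    _ = K₁ * K₂ * (γ * S ^ 2 + δ * S ^ 2 * T) := by ring
end
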